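/- arXiv:2306.15778 — 3 statements merged into one kernel-verified Lean document; each statement's English description precedes it below -/
import Mathlib

section
/- For all integers k ≥ 1 and n ≥ 1: every skew Dyck path containing exactly n occurrences of the factor U D^k L has semilength at least (k+2)n − 1, and there exists a skew Dyck path of semilength exactly (k+2)n − 1 containing exactly n occurrences of the factor U D^k L. -/
/-- The step alphabet for skew Dyck paths: up, down, left. -/
inductive Step : Type
  | U | D | L
  deriving DecidableEq

/-- Number of U steps in a word. -/
def countU (w : List Step) : ℕ := w.count Step.U
/-- Number of D steps in a word. -/
def countD (w : List Step) : ℕ := w.count Step.D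
/-- Number of L steps in a word. -/
def countL (w : List Step) : ℕ := w.count Step.L

/-- A skew Dyck path: every prefix has at least as many U's as D's and L's combined,
the totals balance, and there is no factor `UL` or `LU`. -/
def IsSkewDyck (w : List Step) : Prop :=
  (∀ p, p <+: w → countD p + countL p ≤ countU p) ∧
  countU w = countD w + countL w ∧
  ¬ [Step.U, Step.L] <:+: w ∧ ¬ [Step.L, Step.U] <:+: w

/-- The semilength of a skew Dyck path is its number of U's. -/
def semilength (w : List Step) : ℕ := countU w

/-- The factor `U D^k L`. -/
def boxFactor (k : ℕ) : List Step := Step.U :: (List.replicate k Step.D ++ [Step.L])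

/-- The number of occurrences (starting positions) of `f` as a factor (contiguous
subword) of `w`. -/
def numOccurrences (f w : List Step) : ℕ :=
  ((Finset.range (w.length + 1)).filter (fun i => f <+: w.drop i)).card

/-- A `k`-box path of size `n`: a skew Dyck path of semilength `(k+2)n - 1` with
exactly `n` occurrences of the factor `U D^k L`. -/
def IsBoxPath (k n : ℕ) (w : List Step) : Prop :=
  IsSkewDyck w ∧ semilength w = (k+2)*n - 1 ∧ numOccurrences (boxFactor k) w = n

/-- Number of returns: positions `i` such that the `(i+1)`-st letter is a `D` or `L`
and the prefix of length `i+1` is balanced (the path returns to the x-axis). -/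
def numReturns (w : List Step) : ℕ :=
  ((Finset.range w.length).filter (fun i =>
    (w[i]? = some Step.D ∨ w[i]? = some Step.L) ∧
    countU (w.take (i+1)) = countD (w.take (i+1)) + countL (w.take (i+1)))).card

/-- Number of long ascents: maximal runs of consecutive U's of length at least 2,
counted via their starting positions. -/
def numLongAscents (w : List Step) : ℕ :=
  ((Finset.range w.length).filter (fun i =>
    w[i]? = some Step.U ∧ w[i+1]? = some Step.U ∧
    (i = 0 ∨ w[i-1]? ≠ some Step.U))).card

/-- The word `U^{a_1} D^k L D U^{a_2} D^k L D ⋯ U^{a_{n-1}} D^k L D U^{a_n} D^k L`. -/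
def boxForm (k : ℕ) : List ℕ → List Step
  | [] => []
  | [a] => List.replicate a Step.U ++ List.replicate k Step.D ++ [Step.L]
  | a :: b :: rest =>
      List.replicate a Step.U ++ List.replicate k Step.D ++ [Step.L, Step.D] ++
        boxForm k (b :: rest)

/-- A block `U^b D^{k-1} L D` of an augmented `k`-Dyck path. -/
def augBlock (k b : ℕ) : List Step :=
  List.replicate b Step.U ++ List.replicate (k-1) Step.D ++ [Step.L, Step.D]

/-- The word `U^{b_1} D^{k-1} L D ⋯ U^{b_m} D^{k-1} L D`. -/
def augForm (k : ℕ) (b : List ℕ) : List Step := (b.map (augBlock k)).flatten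

/-- An augmented `k`-Dyck path: a skew Dyck path of the form
`U^{b_1} D^{k-1} L D ⋯ U^{b_m} D^{k-1} L D` with all `b_i` positive. -/
def IsAugmented (k : ℕ) (w : List Step) : Prop :=
  IsSkewDyck w ∧ ∃ b : List ℕ, (∀ x ∈ b, 0 < x) ∧ w = augForm k b

/-- An augmented `k`-Dyck path of size `m`. -/
def IsAugmentedOfSize (k m : ℕ) (w : List Step) : Prop :=
  IsSkewDyck w ∧ ∃ b : List ℕ, b.length = m ∧ (∀ x ∈ b, 0 < x) ∧ w = augForm k b

/-- A tailed `k`-box path ends with the factor `U^{k+1} D^k L`. -/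
def Tailed (k : ℕ) (w : List Step) : Prop :=
  (List.replicate (k+1) Step.U ++ List.replicate k Step.D ++ [Step.L]) <:+ w

namespace SkewAux

/-! ### Generic counting lemmas -/

lemma length_eq_counts (w : List Step) :
    w.length = countU w + countD w + countL w := by
  induction w with
  | nil => simp [countU, countD, countL]
  | cons x t ih =>
    simp only [countU, countD, countL, List.count_cons, List.length_cons] at ih ⊢
    cases x <;> simp <;> omega

lemma count_eq_card (a : Step) (w : List Step) :
    w.count a =
      ((Finset.range w.length).filter (fun i => w[i]? = some a)).card := by
  induction w with
  | nil => simp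
  | cons x t ih =>
    rw [Finset.card_filter] at ih ⊢
    rw [List.length_cons, Finset.sum_range_succ']
    simp only [List.getElem?_cons_succ, List.getElem?_cons_zero]
    rw [List.count_cons, ih]
    congr 1
    by_cases h : x = a <;> simp [h, beq_iff_eq]

lemma infix_pair {w : List Step} {a b : Step} {i : ℕ}
    (ha : w[i]? = some a) (hb : w[i+1]? = some b) : [a, b] <:+: w := by
  rw [List.infix_iff_prefix_suffix]
  refine ⟨w.drop i, ?_, List.drop_suffix i w⟩
  obtain ⟨hi1, e2⟩ := List.getElem?_eq_some_iff.1 hb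
  have hi : i < w.length := by omega
  have e1 : w[i] = a := by
    rw [List.getElem?_eq_getElem hi] at ha; exact Option.some.inj ha
  refine ⟨w.drop (i+2), ?_⟩
  rw [List.drop_eq_getElem_cons hi, List.drop_eq_getElem_cons hi1, e1, e2]
  rfl

lemma pref_get {f w' : List Step} (h : f <+: w') {j : ℕ} {x : Step}
    (hj : f[j]? = some x) : w'[j]? = some x := by
  obtain ⟨t, rfl⟩ := h
  rw [List.getElem?_append_left (List.getElem?_eq_some_iff.1 hj).1]
  exact hj

/-! ### boxFactor facts -/

lemma bf_len (k : ℕ) : (boxFactor k).length = k + 2 := by simp [boxFactor]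

lemma bf0 (k : ℕ) : (boxFactor k)[0]? = some Step.U := by simp [boxFactor]

lemma bfD (k : ℕ) {j : ℕ} (h1 : 1 ≤ j) (h2 : j ≤ k) :
    (boxFactor k)[j]? = some Step.D := by
  obtain ⟨j', rfl⟩ : ∃ j', j = j' + 1 := ⟨j - 1, by omega⟩
  simp only [boxFactor, List.getElem?_cons_succ]
  rw [List.getElem?_append_left (by simp; omega)]
  exact List.getElem?_replicate_of_lt (by omega)

lemma bfL (k : ℕ) : (boxFactor k)[k+1]? = some Step.L := by
  simp only [boxFactor, List.getElem?_cons_succ]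
  rw [List.getElem?_append_right (by simp)]
  simp

/-! ### The lower bound -/

lemma lower (k n : ℕ) (hk : 1 ≤ k) (hn : 1 ≤ n) (w : List Step)
    (hw : IsSkewDyck w) (hocc : numOccurrences (boxFactor k) w = n) :
    (k+2)*n - 1 ≤ semilength w := by
  classical
  obtain ⟨n, rfl⟩ : ∃ m, n = m + 1 := ⟨n - 1, by omega⟩
  obtain ⟨hpre, hbal, hUL, hLU⟩ := hw
  unfold numOccurrences at hocc
  set len := w.length with hlen
  set S : Finset ℕ :=
    (Finset.range (len+1)).filter (fun i => boxFactor k <+: w.drop i) with hSdef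
  have hScard : S.card = n + 1 := hocc
  have hmem : ∀ p ∈ S, boxFactor k <+: w.drop p := by
    intro p hp; exact (Finset.mem_filter.1 hp).2
  have hF1 : ∀ p ∈ S, p + (k+2) ≤ len := by
    intro p hp
    have h := List.IsPrefix.length_le (hmem p hp)
    rw [bf_len, List.length_drop] at h; omega
  have hget : ∀ p ∈ S, ∀ j, j < k + 2 → w[p+j]? = (boxFactor k)[j]? := by
    intro p hp j hj
    obtain ⟨t, ht⟩ := hmem p hp
    rw [← List.getElem?_drop, ← ht,
      List.getElem?_append_left (by rw [bf_len]; omega)]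
  have wU : ∀ p ∈ S, w[p]? = some Step.U := by
    intro p hp
    have := hget p hp 0 (by omega)
    simpa [bf0] using this
  have wD : ∀ p ∈ S, ∀ j, 1 ≤ j → j ≤ k → w[p+j]? = some Step.D := by
    intro p hp j h1 h2
    rw [hget p hp j (by omega), bfD k h1 h2]
  have wL : ∀ p ∈ S, w[p+(k+1)]? = some Step.L := by
    intro p hp
    rw [hget p hp (k+1) (by omega), bfL]
  -- any position i with p < i ≤ p+k+2 (and i < len) is not a U
  have hnotU : ∀ p ∈ S, ∀ i, p + 1 ≤ i → i ≤ p + (k+2) → ¬ w[i]? = some Step.U := by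
    intro p hp i h1 h2 hU
    rcases Nat.lt_or_ge i (p+(k+1)) with h | h
    · have hD : w[p+(i-p)]? = some Step.D := wD p hp (i-p) (by omega) (by omega)
      rw [show p + (i-p) = i by omega, hU] at hD
      simp at hD
    rcases Nat.eq_or_lt_of_le h with h' | h'
    · have hL := wL p hp
      rw [h'] at hL
      rw [hL] at hU
      simp at hU
    · have hi' : i = p + (k+1) + 1 := by omega
      have hU' : w[p+(k+1)+1]? = some Step.U := by rw [← hi']; exact hU
      exact hLU (infix_pair (wL p hp) hU')
  have hsep : ∀ p ∈ S, ∀ q ∈ S, p < q → p + (k+3) ≤ q := by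
    intro p hp q hq hpq
    by_contra hcon
    push_neg at hcon
    exact hnotU p hp q (by omega) (by omega) (wU q hq)
  set f : ℕ → Finset ℕ := fun p => Finset.Ico (p+1) (min (p+(k+3)) len) with hf
  have hdisj : ∀ x ∈ S, ∀ y ∈ S, x ≠ y → Disjoint (f x) (f y) := by
    intro x hx y hy hxy
    rw [Finset.disjoint_left]
    intro i hix hiy
    simp only [hf, Finset.mem_Ico, lt_min_iff] at hix hiy
    rcases Nat.lt_or_ge x y with h | h
    · have := hsep x hx y hy h; omega
    · have := hsep y hy x hx (by omega); omega
  have hcardT : (S.biUnion f).card = ∑ p ∈ S, (f p).card :=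
    Finset.card_biUnion hdisj
  have hsub : S.biUnion f ⊆
      (Finset.range len).filter (fun i => ¬ w[i]? = some Step.U) := by
    intro i hi
    obtain ⟨p, hp, hip⟩ := Finset.mem_biUnion.1 hi
    simp only [hf, Finset.mem_Ico, lt_min_iff] at hip
    exact Finset.mem_filter.2 ⟨Finset.mem_range.2 hip.2.2,
      hnotU p hp i hip.1 (by omega)⟩
  have hflow : ∀ p ∈ S, k+1 ≤ (f p).card := by
    intro p hp
    have h1 := hF1 p hp
    simp only [hf, Nat.card_Ico]
    have h2 : p + (k + 2) ≤ min (p+(k+3)) len := le_min (by omega) (by omega)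
    omega
  have hfhigh : ∀ p ∈ S, p + (k+2) ≠ len → k+2 ≤ (f p).card := by
    intro p hp hne
    have h1 := hF1 p hp
    simp only [hf, Nat.card_Ico]
    have h2 : p + (k + 3) ≤ min (p+(k+3)) len := le_min le_rfl (by omega)
    omega
  have hsum : (k+2)*(n+1) - 1 ≤ ∑ p ∈ S, (f p).card := by
    by_cases h0 : (len - (k+2)) ∈ S
    · have hsplit := Finset.add_sum_erase S (fun p => (f p).card) h0
      have hrest : (S.erase (len - (k+2))).card • (k+2) ≤
          ∑ p ∈ S.erase (len - (k+2)), (f p).card := by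
        apply Finset.card_nsmul_le_sum
        intro x hx
        have hxS := Finset.mem_of_mem_erase hx
        have hxne := Finset.ne_of_mem_erase hx
        refine hfhigh x hxS ?_
        have := hF1 x hxS
        omega
      rw [Finset.card_erase_of_mem h0, hScard, smul_eq_mul] at hrest
      have hp0 := hflow _ h0
      have hkey : ∀ A B RR F : ℕ, A = B + (k+2) → B ≤ RR → k+1 ≤ F →
          A - 1 ≤ F + RR := by
        intro A B RR F e1 e2 e3; omega
      have he : (k+2)*(n+1) = (n+1-1) * (k+2) + (k+2) := by
        simp; ring
      rw [← hsplit]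
      exact hkey _ _ _ _ he hrest hp0
    · have hall : S.card • (k+2) ≤ ∑ p ∈ S, (f p).card := by
        apply Finset.card_nsmul_le_sum
        intro x hx
        refine hfhigh x hx ?_
        intro hEq
        have hx' : x = len - (k+2) := by have := hF1 x hx; omega
        exact h0 (hx' ▸ hx)
      rw [hScard, smul_eq_mul] at hall
      calc (k+2)*(n+1) - 1 ≤ (k+2)*(n+1) := Nat.sub_le _ _
        _ = (n+1)*(k+2) := Nat.mul_comm _ _
        _ ≤ _ := hall
  have h2 : ((Finset.range len).filter (fun i => ¬ w[i]? = some Step.U)).card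
      = len - countU w := by
    have h := Finset.card_filter_add_card_filter_not
      (s := Finset.range len) (p := fun i => w[i]? = some Step.U)
    have h' := count_eq_card Step.U w
    rw [Finset.card_range] at h
    have : countU w = ((Finset.range len).filter
        (fun i => w[i]? = some Step.U)).card := h'
    omega
  have h3 : len = 2 * countU w := by
    have := length_eq_counts w
    omega
  have h4 := Finset.card_le_card hsub
  rw [hcardT] at h4
  rw [h2] at h4
  show (k+2)*(n+1) - 1 ≤ countU w
  omega

end SkewAux
namespace SkewAux

/-! ### The witness construction (for `k+1` in place of `k`) -/

def unitW (k : ℕ) : List Step :=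
  List.replicate (k+3) Step.U ++ (List.replicate (k+1) Step.D ++ [Step.L, Step.D])

def tailW (k : ℕ) : List Step :=
  List.replicate (k+2) Step.U ++ (List.replicate (k+1) Step.D ++ [Step.L])

def wit (k : ℕ) : ℕ → List Step
  | 0 => tailW k
  | n+1 => unitW k ++ wit k n

/-! #### Counts -/

lemma tailW_counts :
    countU (tailW k) = k+2 ∧ countD (tailW k) = k+1 ∧ countL (tailW k) = 1 := by
  refine ⟨?_, ?_, ?_⟩ <;>
    simp [tailW, countU, countD, countL, List.count_append, List.count_replicate]

lemma unitW_counts :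
    countU (unitW k) = k+3 ∧ countD (unitW k) = k+2 ∧ countL (unitW k) = 1 := by
  refine ⟨?_, ?_, ?_⟩ <;>
    simp [unitW, countU, countD, countL, List.count_append, List.count_replicate,
      List.count_cons]

lemma wit_counts (k n : ℕ) :
    countU (wit k n) = (k+2) + n*(k+3) ∧ countD (wit k n) = (k+1) + n*(k+2) ∧
      countL (wit k n) = 1 + n := by
  induction n with
  | zero => simpa [wit] using tailW_counts (k := k)
  | succ m ih =>
    obtain ⟨h1, h2, h3⟩ := ih
    obtain ⟨u1, u2, u3⟩ := unitW_counts (k := k)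
    refine ⟨?_, ?_, ?_⟩ <;>
      simp only [wit, countU, countD, countL, List.count_append] at h1 h2 h3 u1 u2 u3 ⊢
    · rw [u1, h1]; ring
    · rw [u2, h2]; ring
    · rw [u3, h3]; ring

lemma wit_balance (k n : ℕ) :
    countU (wit k n) = countD (wit k n) + countL (wit k n) := by
  obtain ⟨h1, h2, h3⟩ := wit_counts k n
  rw [h1, h2, h3]; ring

/-! #### Prefix condition -/

lemma take_replicate' (a : Step) (n i : ℕ) :
    (List.replicate n a).take i = List.replicate (min i n) a := by
  apply List.eq_replicate_iff.2
  constructor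
  · simp
  · intro b hb
    exact List.eq_of_mem_replicate (List.take_subset _ _ hb)

lemma prefix_split {p u v : List Step} (h : p <+: u ++ v) :
    p <+: u ∨ ∃ q, q <+: v ∧ p = u ++ q := by
  rcases le_or_gt p.length u.length with hle | hlt
  · left
    have h1 := List.prefix_iff_eq_take.1 h
    rw [List.take_append,
      Nat.sub_eq_zero_of_le hle, List.take_zero, List.append_nil] at h1
    rw [h1]
    exact List.take_prefix _ _
  · right
    refine ⟨v.take (p.length - u.length), List.take_prefix _ _, ?_⟩
    have h1 := List.prefix_iff_eq_take.1 h
    rwa [List.take_append,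
      List.take_of_length_le (by omega)] at h1

lemma prefcond_block {a : ℕ} {d : List Step} (hd : Step.U ∉ d)
    (hlen : d.length ≤ a) :
    ∀ p, p <+: (List.replicate a Step.U ++ d) →
      countD p + countL p ≤ countU p := by
  intro p hp
  rcases prefix_split hp with h | ⟨q, hq, rfl⟩
  · have h1 := List.prefix_iff_eq_take.1 h
    rw [take_replicate'] at h1
    rw [h1]
    simp [countU, countD, countL, List.count_replicate]
  · have hqU : Step.U ∉ q := fun hm => hd (hq.subset hm)
    have hql : q.length ≤ d.length := hq.length_le
    have hcu : countU (List.replicate a Step.U ++ q) = a := by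
      simp [countU, List.count_append, List.count_replicate,
        List.count_eq_zero_of_not_mem hqU]
    have h2 := length_eq_counts (List.replicate a Step.U ++ q)
    have hl : (List.replicate a Step.U ++ q).length = a + q.length := by simp
    omega

lemma prefcond_append {u v : List Step}
    (hu : ∀ p, p <+: u → countD p + countL p ≤ countU p)
    (hv : ∀ p, p <+: v → countD p + countL p ≤ countU p)
    (hbal : countU u = countD u + countL u) :
    ∀ p, p <+: u ++ v → countD p + countL p ≤ countU p := by
  intro p hp
  rcases prefix_split hp with h | ⟨q, hq, rfl⟩
  · exact hu p h
  · have hvq := hv q hq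
    simp only [countU, countD, countL, List.count_append] at hvq hbal ⊢
    omega

lemma notU_tail : Step.U ∉ List.replicate (k+1) Step.D ++ [Step.L] := by
  simp [List.mem_replicate]

lemma notU_unit : Step.U ∉ List.replicate (k+1) Step.D ++ [Step.L, Step.D] := by
  simp [List.mem_replicate]

lemma wit_prefcond (k n : ℕ) :
    ∀ p, p <+: wit k n → countD p + countL p ≤ countU p := by
  induction n with
  | zero =>
    exact prefcond_block notU_tail (by simp)
  | succ m ih =>
    refine prefcond_append (prefcond_block notU_unit (by simp)) ih ?_
    obtain ⟨u1, u2, u3⟩ := unitW_counts (k := k)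
    rw [u1, u2, u3]

/-! #### No `UL` / `LU` factors -/

def R : Step → Step → Prop := fun a b =>
  ¬(a = Step.U ∧ b = Step.L) ∧ ¬(a = Step.L ∧ b = Step.U)

lemma hRD : ∀ y, R Step.D y := by intro y; simp [R]
lemma hRUU : R Step.U Step.U := by simp [R]
lemma hRUD : R Step.U Step.D := by simp [R]
lemma hRDD : R Step.D Step.D := hRD _
lemma hRDL : R Step.D Step.L := hRD _
lemma hRLD : R Step.L Step.D := by simp [R]

lemma not_infix_of_chain' {w : List Step} (h : List.Chain' R w) :
    ¬ [Step.U, Step.L] <:+: w ∧ ¬ [Step.L, Step.U] <:+: w := by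
  constructor <;> intro hin <;>
    have h2 := List.isChain_pair.1 (h.infix hin) <;> simp [R] at h2

lemma chain'_DL : List.Chain' R (List.replicate (k+1) Step.D ++ [Step.L]) := by
  apply List.IsChain.append (List.isChain_replicate_of_rel _ hRDD)
    (List.isChain_singleton _)
  intro x hx y hy
  have hx' : x = Step.D :=
    List.eq_of_mem_replicate (List.mem_of_mem_getLast? hx)
  have hy' : y = Step.L := by simpa using List.mem_of_mem_head? hy
  rw [hx', hy']; exact hRDL

lemma chain'_DLD : List.Chain' R (List.replicate (k+1) Step.D ++ [Step.L, Step.D]) := by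
  apply List.IsChain.append (List.isChain_replicate_of_rel _ hRDD)
    (List.isChain_pair.2 hRLD)
  intro x hx y hy
  have hx' : x = Step.D :=
    List.eq_of_mem_replicate (List.mem_of_mem_getLast? hx)
  rw [hx']; exact hRD y

lemma head_DL : (List.replicate (k+1) Step.D ++ [Step.L]).head? = some Step.D := by
  rw [List.replicate_succ]; rfl

lemma head_DLD : (List.replicate (k+1) Step.D ++ [Step.L, Step.D]).head? = some Step.D := by
  rw [List.replicate_succ]; rfl

lemma chain'_tailW : List.Chain' R (tailW k) := by
  apply List.IsChain.append (List.isChain_replicate_of_rel _ hRUU) chain'_DL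
  intro x hx y hy
  have hx' : x = Step.U :=
    List.eq_of_mem_replicate (List.mem_of_mem_getLast? hx)
  rw [head_DL] at hy
  have hy' : y = Step.D := by simpa using hy.symm
  rw [hx', hy']; exact hRUD

lemma chain'_unitW : List.Chain' R (unitW k) := by
  apply List.IsChain.append (List.isChain_replicate_of_rel _ hRUU) chain'_DLD
  intro x hx y hy
  have hx' : x = Step.U :=
    List.eq_of_mem_replicate (List.mem_of_mem_getLast? hx)
  rw [head_DLD] at hy
  have hy' : y = Step.D := by simpa using hy.symm
  rw [hx', hy']; exact hRUD

lemma unitW_getLast : (unitW k).getLast? = some Step.D := by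
  rw [unitW, List.getLast?_append_of_ne_nil _ (by simp),
    List.getLast?_append_of_ne_nil _ (by simp)]
  rfl

lemma chain'_wit (k n : ℕ) : List.Chain' R (wit k n) := by
  induction n with
  | zero => exact chain'_tailW
  | succ m ih =>
    apply List.IsChain.append chain'_unitW ih
    intro x hx y hy
    rw [unitW_getLast] at hx
    have hx' : x = Step.D := by simpa using hx.symm
    rw [hx']; exact hRD y

lemma wit_skew (k n : ℕ) : IsSkewDyck (wit k n) :=
  ⟨wit_prefcond k n, wit_balance k n,
    (not_infix_of_chain' (chain'_wit k n)).1,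
    (not_infix_of_chain' (chain'_wit k n)).2⟩

end SkewAux
namespace SkewAux

/-! #### Occurrence counting -/

lemma drop_replicate' (a : Step) (n i : ℕ) :
    (List.replicate n a).drop i = List.replicate (n - i) a := by
  apply List.eq_replicate_iff.2
  constructor
  · simp
  · intro b hb
    exact List.eq_of_mem_replicate (List.drop_subset _ _ hb)

lemma tailW_length : (tailW k).length = 2*k+4 := by
  simp [tailW]; omega

lemma unitW_length : (unitW k).length = 2*k+6 := by
  simp [unitW]; omega

lemma t1 {k i : ℕ} (h : i ≤ k) : (tailW k)[i+1]? = some Step.U := by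
  rw [tailW, List.getElem?_append_left (by simp; omega)]
  exact List.getElem?_replicate_of_lt (by omega)

lemma t2 {k i : ℕ} (h : k+2 ≤ i) : ¬ (tailW k)[i]? = some Step.U := by
  intro hU
  rw [tailW] at hU
  have hx : (List.replicate (k+2) Step.U).length ≤ i := by simp; omega
  rw [List.getElem?_append_right hx] at hU
  exact notU_tail (List.mem_of_getElem? hU)

lemma drop_tailW {k : ℕ} : (tailW k).drop (k+1) = boxFactor (k+1) := by
  rw [tailW, List.drop_append, drop_replicate',
    List.length_replicate]
  have e1 : k+2-(k+1) = 1 := by omega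
  have e2 : k+1-(k+2) = 0 := by omega
  rw [e1, e2]
  simp [boxFactor]

lemma occ_tail {k : ℕ} : numOccurrences (boxFactor (k+1)) (tailW k) = 1 := by
  unfold numOccurrences
  have hset : (Finset.range ((tailW k).length + 1)).filter
      (fun i => boxFactor (k+1) <+: (tailW k).drop i) = {k+1} := by
    ext i
    simp only [Finset.mem_filter, Finset.mem_range, Finset.mem_singleton,
      tailW_length]
    constructor
    · rintro ⟨hi, hP⟩
      by_contra hne
      rcases Nat.lt_or_ge i (k+1) with h | h
      · have hD := pref_get hP (bfD (k+1) (le_refl 1) (by omega))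
        rw [List.getElem?_drop] at hD
        have hU := t1 (k := k) (i := i) (by omega)
        rw [hD] at hU
        simp at hU
      · have hU := pref_get hP (bf0 (k+1))
        rw [List.getElem?_drop] at hU
        exact t2 (k := k) (i := i) (by omega) (by simpa using hU)
    · rintro rfl
      refine ⟨by omega, ?_⟩
      rw [drop_tailW]
  rw [hset]
  simp

lemma u1 {k i : ℕ} (v : List Step) (h : i ≤ k+1) :
    (unitW k ++ v)[i+1]? = some Step.U := by
  rw [List.getElem?_append_left (by rw [unitW_length]; omega), unitW,
    List.getElem?_append_left (by simp; omega)]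
  exact List.getElem?_replicate_of_lt (by omega)

lemma u2 {k i : ℕ} (v : List Step) (h1 : k+3 ≤ i) (h2 : i ≤ 2*k+5) :
    ¬ (unitW k ++ v)[i]? = some Step.U := by
  intro hU
  rw [List.getElem?_append_left (by rw [unitW_length]; omega), unitW] at hU
  have hx : (List.replicate (k+3) Step.U).length ≤ i := by simp; omega
  rw [List.getElem?_append_right hx] at hU
  exact notU_unit (List.mem_of_getElem? hU)

lemma u3 {k : ℕ} (v : List Step) :
    (unitW k ++ v).drop (k+2) = boxFactor (k+1) ++ (Step.D :: v) := by
  rw [List.drop_append, unitW_length]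
  have e0 : k+2-(2*k+6) = 0 := by omega
  rw [e0, List.drop_zero, unitW, List.drop_append,
    drop_replicate', List.length_replicate]
  have e1 : k+3-(k+2) = 1 := by omega
  have e2 : k+2-(k+3) = 0 := by omega
  rw [e1, e2]
  simp [boxFactor]

lemma u4 {k i : ℕ} (v : List Step) (h : 2*k+6 ≤ i) :
    (unitW k ++ v).drop i = v.drop (i - (2*k+6)) := by
  rw [List.drop_append, unitW_length,
    List.drop_eq_nil_of_le (by rw [unitW_length]; omega), List.nil_append]

lemma occ_cons (k : ℕ) (v : List Step) :
    numOccurrences (boxFactor (k+1)) (unitW k ++ v)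
      = numOccurrences (boxFactor (k+1)) v + 1 := by
  unfold numOccurrences
  have hlen : (unitW k ++ v).length = 2*k+6 + v.length := by
    rw [List.length_append, unitW_length]
  have hset : (Finset.range ((unitW k ++ v).length + 1)).filter
      (fun i => boxFactor (k+1) <+: (unitW k ++ v).drop i)
      = insert (k+2) (((Finset.range (v.length + 1)).filter
          (fun j => boxFactor (k+1) <+: v.drop j)).image (· + (2*k+6))) := by
    ext i
    simp only [Finset.mem_insert, Finset.mem_image, Finset.mem_filter,
      Finset.mem_range, hlen]
    constructor
    · rintro ⟨hi, hP⟩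
      by_cases hik : i = k+2
      · exact Or.inl hik
      right
      rcases Nat.lt_or_ge i (2*k+6) with h | h
      · exfalso
        rcases Nat.lt_or_ge i (k+2) with h2 | h2
        · have hD := pref_get hP (bfD (k+1) (le_refl 1) (by omega))
          rw [List.getElem?_drop] at hD
          have hU := u1 (k := k) (i := i) v (by omega)
          rw [hD] at hU
          simp at hU
        · have hU := pref_get hP (bf0 (k+1))
          rw [List.getElem?_drop] at hU
          exact u2 (k := k) (i := i) v (by omega) (by omega) (by simpa using hU)
      · refine ⟨i - (2*k+6), ⟨⟨by omega, ?_⟩, by omega⟩⟩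
        rwa [u4 v h] at hP
    · rintro (rfl | ⟨j, ⟨⟨hj, hQ⟩, rfl⟩⟩)
      · refine ⟨by omega, ?_⟩
        rw [u3]
        exact ⟨Step.D :: v, rfl⟩
      · refine ⟨by omega, ?_⟩
        rw [u4 v (by omega)]
        simpa [Nat.add_sub_cancel] using hQ
  rw [hset, Finset.card_insert_of_notMem, Finset.card_image_of_injective _
    (add_left_injective _)]
  simp only [Finset.mem_image, Finset.mem_filter, Finset.mem_range, not_exists]
  intro j hj
  omega

lemma wit_occ (k n : ℕ) :
    numOccurrences (boxFactor (k+1)) (wit k n) = n + 1 := by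
  induction n with
  | zero => exact occ_tail
  | succ m ih =>
    show numOccurrences (boxFactor (k+1)) (unitW k ++ wit k m) = m + 2
    rw [occ_cons, ih]

end SkewAux
/-- Among skew Dyck paths with exactly `n` occurrences of the factor `U D^k L`,
the minimum possible semilength is `(k+2)n - 1`. -/
theorem statement0 (k n : ℕ) (hk : 1 ≤ k) (hn : 1 ≤ n) :
    (∀ w : List Step, IsSkewDyck w → numOccurrences (boxFactor k) w = n →
      (k+2)*n - 1 ≤ semilength w) ∧
    (∃ w : List Step, IsSkewDyck w ∧ semilength w = (k+2)*n - 1 ∧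
      numOccurrences (boxFactor k) w = n) := by
  obtain ⟨k, rfl⟩ : ∃ k', k = k' + 1 := ⟨k - 1, by omega⟩
  obtain ⟨n, rfl⟩ : ∃ n', n = n' + 1 := ⟨n - 1, by omega⟩
  constructor
  · intro w hw hocc
    exact SkewAux.lower (k+1) (n+1) (by omega) (by omega) w hw hocc
  · refine ⟨SkewAux.wit k n, SkewAux.wit_skew k n, ?_, SkewAux.wit_occ k n⟩
    show countU (SkewAux.wit k n) = (k+1+2)*(n+1) - 1
    rw [(SkewAux.wit_counts k n).1]
    have h : (k+1+2)*(n+1) = (k+2) + n*(k+3) + 1 := by ring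
    rw [h, Nat.add_sub_cancel]
end

section
/- For all integers k ≥ 1 and n ≥ 1: every k-box path of size n is of the form U^{a_1} D^k L D U^{a_2} D^k L D ⋯ U^{a_{n−1}} D^k L D U^{a_n} D^k L for some positive integers a_1, …, a_n. Conversely, any word of this form with positive integers a_1, …, a_n satisfying a_1 + a_2 + ⋯ + a_n = (k+2)n − 1, and such that no prefix of the word contains fewer U's than the total number of D's and L's, is a k-box path of size n. -/
/-! ### auxiliary -/

def occ (f : List Step) : List Step → ℕ
  | [] => if f <+: ([] : List Step) then 1 else 0
  | c :: w => (if f <+: (c :: w) then 1 else 0) + occ f w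

lemma numOccurrences_eq_occ (f w) : numOccurrences f w = occ f w := by
  induction w with
  | nil => simp [numOccurrences, occ]; split <;> simp
  | cons c w ih =>
    rw [numOccurrences, Finset.card_filter] at ih ⊢
    show ∑ i ∈ Finset.range (w.length + 1 + 1), (if f <+: (c :: w).drop i then 1 else 0) = _
    rw [Finset.sum_range_succ']
    simp only [List.drop_succ_cons, List.drop_zero, occ]
    rw [ih]; omega

lemma occ_nil (f : List Step) (hf : f ≠ []) : occ f [] = 0 := by
  simp [occ, hf]

lemma boxFactor_eq (k : ℕ) (hk : 1 ≤ k) :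
    boxFactor k = Step.U :: Step.D :: (List.replicate (k-1) Step.D ++ [Step.L]) := by
  obtain ⟨k', rfl⟩ := Nat.exists_eq_add_of_le hk
  simp [boxFactor, List.replicate_succ, Nat.add_comm]

lemma occ_cons_ne (k : ℕ) {c : Step} (h : c ≠ Step.U) (t : List Step) :
    occ (boxFactor k) (c :: t) = occ (boxFactor k) t := by
  rw [occ, if_neg, Nat.zero_add]
  intro hp
  rw [boxFactor] at hp
  exact h (List.cons_prefix_cons.1 hp).1.symm

lemma occ_noU_append (k : ℕ) {x : List Step} (h : ∀ c ∈ x, c ≠ Step.U) (y : List Step) :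
    occ (boxFactor k) (x ++ y) = occ (boxFactor k) y := by
  induction x with
  | nil => rfl
  | cons c t ih =>
    rw [List.cons_append, occ_cons_ne k (h c (by simp)) _]
    exact ih (fun c hc => h c (by simp [hc]))

lemma occ_noU (k : ℕ) {x : List Step} (h : ∀ c ∈ x, c ≠ Step.U) :
    occ (boxFactor k) x = 0 := by
  have := occ_noU_append k h []
  rw [List.append_nil] at this
  rw [this, occ_nil]
  simp [boxFactor]

lemma occ_repU_succ (k : ℕ) (hk : 1 ≤ k) (m : ℕ) (z : List Step) :
    occ (boxFactor k) (List.replicate (m+1) Step.U ++ z) =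
      (if (List.replicate k Step.D ++ [Step.L]) <+: z then 1 else 0) + occ (boxFactor k) z := by
  induction m with
  | zero =>
    rw [List.replicate_succ, List.replicate_zero]
    show occ (boxFactor k) (Step.U :: z) = _
    rw [occ]
    congr 1
    rw [boxFactor]
    by_cases h : (List.replicate k Step.D ++ [Step.L]) <+: z
    · rw [if_pos h, if_pos (List.cons_prefix_cons.2 ⟨rfl, h⟩)]
    · rw [if_neg h, if_neg (fun hp => h (List.cons_prefix_cons.1 hp).2)]
  | succ m ih =>
    rw [List.replicate_succ]
    show occ (boxFactor k) (Step.U :: (List.replicate (m+1) Step.U ++ z)) = _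
    rw [occ, ih, if_neg, Nat.zero_add]
    intro hp
    rw [boxFactor_eq k hk] at hp
    have := (List.cons_prefix_cons.1 hp).2
    rw [List.replicate_succ, List.cons_append] at this
    exact Step.noConfusion (List.cons_prefix_cons.1 this).1

/-! ### counts -/

lemma count_eq_len {x : List Step} (h : ∀ c ∈ x, c ≠ Step.U) :
    countD x + countL x = x.length := by
  induction x with
  | nil => simp [countD, countL]
  | cons c t ih =>
    have ht := ih (fun c hc => h c (by simp [hc]))
    have hc := h c (by simp)
    unfold countD countL at *
    cases c <;> simp [List.count_cons] at * <;> omega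

lemma boxForm_cons_cons (k a b : ℕ) (rest : List ℕ) :
    boxForm k (a :: b :: rest) =
      List.replicate a Step.U ++ ((List.replicate k Step.D ++ [Step.L, Step.D]) ++
        boxForm k (b :: rest)) := by
  simp [boxForm, List.append_assoc]

lemma boxForm_single (k a : ℕ) :
    boxForm k [a] = List.replicate a Step.U ++ (List.replicate k Step.D ++ [Step.L]) := by
  simp [boxForm, List.append_assoc]

lemma countU_boxForm (k : ℕ) : ∀ a : List ℕ, countU (boxForm k a) = a.sum := by
  intro a
  induction a with
  | nil => simp [boxForm, countU]
  | cons a0 tl ih =>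
    cases tl with
    | nil => simp [boxForm_single, countU, List.count_append, List.count_replicate]
    | cons a1 rest =>
      rw [boxForm_cons_cons]
      unfold countU at *
      simp [List.count_append, List.count_replicate, ih, List.count_cons]

lemma countD_boxForm (k : ℕ) : ∀ a : List ℕ, countD (boxForm k a) = k * a.length + (a.length - 1) := by
  intro a
  induction a with
  | nil => simp [boxForm, countD]
  | cons a0 tl ih =>
    cases tl with
    | nil => simp [boxForm_single, countD, List.count_append, List.count_replicate]
    | cons a1 rest =>
      rw [boxForm_cons_cons]
      unfold countD at *
      simp only [List.count_append, List.count_replicate, List.count_cons, List.length_cons] at *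
      have h1 : k * (rest.length + 1 + 1) = k * (rest.length + 1) + k := by ring
      simp only [ih]
      simp
      omega

lemma countL_boxForm (k : ℕ) : ∀ a : List ℕ, countL (boxForm k a) = a.length := by
  intro a
  induction a with
  | nil => simp [boxForm, countL]
  | cons a0 tl ih =>
    cases tl with
    | nil => simp [boxForm_single, countL, List.count_append, List.count_replicate]
    | cons a1 rest =>
      rw [boxForm_cons_cons]
      unfold countL at *
      simp [List.count_append, List.count_replicate, ih, List.count_cons]

lemma head?_boxForm (k : ℕ) (a0 : ℕ) (ha : 0 < a0) (tl : List ℕ) :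
    (boxForm k (a0 :: tl)).head? = some Step.U := by
  obtain ⟨a', rfl⟩ := Nat.exists_eq_add_of_le ha
  cases tl <;> simp [boxForm, List.replicate_succ, Nat.add_comm]

/-! ### chain -/

def StepR (x y : Step) : Prop := ¬(x = Step.U ∧ y = Step.L) ∧ ¬(x = Step.L ∧ y = Step.U)

lemma chain'_rep_append {c : Step} (hcc : StepR c c) {w : List Step} (hw : List.Chain' StepR w)
    (hhead : ∀ d, w.head? = some d → StepR c d) (m : ℕ) :
    List.Chain' StepR (List.replicate m c ++ w) := by
  induction m with
  | zero => simpa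
  | succ m ih =>
    rw [List.replicate_succ, List.cons_append]
    rw [List.Chain', List.isChain_cons]
    refine ⟨?_, ih⟩
    intro y hy
    cases m with
    | zero => exact hhead y (by simpa using hy)
    | succ m =>
      rw [List.replicate_succ, List.cons_append, List.head?_cons] at hy
      simp only [Option.mem_def, Option.some_inj] at hy
      subst hy
      exact hcc

lemma chain'_boxForm (k : ℕ) (hk : 1 ≤ k) :
    ∀ a : List ℕ, (∀ x ∈ a, 0 < x) → List.Chain' StepR (boxForm k a) := by
  intro a
  induction a with
  | nil => intro _; simp [boxForm, List.Chain']
  | cons a0 tl ih =>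
    intro hpos
    obtain ⟨k', rfl⟩ : ∃ k', k = k' + 1 := ⟨k-1, by omega⟩
    cases tl with
    | nil =>
      rw [boxForm_single]
      apply chain'_rep_append (by simp [StepR])
      · apply chain'_rep_append (by simp [StepR]) (by simp [List.Chain'])
        intro d hd; simp at hd; subst hd; simp [StepR]
      · intro d hd
        rw [List.replicate_succ, List.cons_append, List.head?_cons] at hd
        rw [Option.some_inj] at hd; subst hd; simp [StepR]
    | cons a1 rest =>
      rw [boxForm_cons_cons]
      have hcore : List.Chain' StepR ([Step.L, Step.D] ++ boxForm (k'+1) (a1 :: rest)) := by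
        rw [List.cons_append, List.cons_append, List.nil_append, List.Chain', List.isChain_cons,
          List.isChain_cons]
        refine ⟨by simp [StepR], ?_, ih (fun x hx => hpos x (by simp [hx]))⟩
        intro y hy
        rw [head?_boxForm _ _ (hpos a1 (by simp)) _] at hy
        cases hy; simp [StepR]
      apply chain'_rep_append (by simp [StepR])
      · rw [List.append_assoc]
        apply chain'_rep_append (by simp [StepR]) hcore
        intro d hd; simp at hd; subst hd; simp [StepR]
      · intro d hd
        rw [List.replicate_succ] at hd
        simp at hd
        subst hd; simp [StepR]

lemma not_infix_of_chain' {w : List Step} (h : List.Chain' StepR w) {x y : Step}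
    (hxy : ¬ StepR x y) : ¬ [x, y] <:+: w := by
  rintro ⟨s, t, rfl⟩
  have h1 := (List.isChain_append.1 h).1
  have h2 := (List.isChain_append.1 h1).2.1
  exact hxy (List.isChain_cons_cons.1 h2).1

/-! ### occ of boxForm -/

lemma occ_boxForm (k : ℕ) (hk : 1 ≤ k) :
    ∀ a : List ℕ, (∀ x ∈ a, 0 < x) → occ (boxFactor k) (boxForm k a) = a.length := by
  intro a
  induction a with
  | nil => intro _; simp [boxForm, occ, boxFactor]
  | cons a0 tl ih =>
    intro hpos
    obtain ⟨a', ha'⟩ : ∃ a', a0 = a' + 1 := ⟨a0 - 1, by have := hpos a0 (by simp); omega⟩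
    cases tl with
    | nil =>
      rw [boxForm_single, ha', occ_repU_succ k hk]
      rw [if_pos (by exact List.prefix_refl _), occ_noU k (by intro c hc; cases c <;> simp_all)]
      simp
    | cons a1 rest =>
      rw [boxForm_cons_cons, ha', occ_repU_succ k hk]
      rw [if_pos, occ_noU_append k (x := List.replicate k Step.D ++ [Step.L, Step.D]) (by intro c hc; cases c <;> simp_all),
        ih (fun x hx => hpos x (by simp [hx]))]
      · simp; omega
      · refine ⟨Step.D :: boxForm k (a1 :: rest), ?_⟩
        simp

/-! ### splitters -/

lemma exists_maxU : ∀ w : List Step, ∃ m r, w = List.replicate m Step.U ++ r ∧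
    (r = [] ∨ r.head? ≠ some Step.U) := by
  intro w
  induction w with
  | nil => exact ⟨0, [], by simp⟩
  | cons c t ih =>
    obtain ⟨m, r, h1, h2⟩ := ih
    by_cases hc : c = Step.U
    · subst hc
      exact ⟨m + 1, r, by rw [List.replicate_succ, List.cons_append, h1], h2⟩
    · exact ⟨0, c :: t, by simp, Or.inr (by simp [hc])⟩

lemma exists_maxDown : ∀ r : List Step, ∃ s w₂, r = s ++ w₂ ∧ (∀ c ∈ s, c ≠ Step.U) ∧
    (w₂ = [] ∨ w₂.head? = some Step.U) := by
  intro r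
  induction r with
  | nil => exact ⟨[], [], by simp⟩
  | cons c t ih =>
    obtain ⟨s, w₂, h1, h2, h3⟩ := ih
    by_cases hc : c = Step.U
    · subst hc
      exact ⟨[], Step.U :: t, by simp, by simp, Or.inr (by simp)⟩
    · refine ⟨c :: s, w₂, by rw [List.cons_append, h1], ?_, h3⟩
      intro d hd
      rcases List.mem_cons.1 hd with rfl | hd
      · exact hc
      · exact h2 d hd

lemma getLast?_append_ne (x : List Step) {y : List Step} (hy : y ≠ []) :
    (x ++ y).getLast? = y.getLast? := by
  rcases (List.eq_nil_or_concat y) with rfl | ⟨y₀, a, rfl⟩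
  · exact absurd rfl hy
  · rw [List.concat_eq_append, ← List.append_assoc, List.getLast?_concat, List.getLast?_concat]

lemma head_eq_U {w : List Step} (h : w.head? = some Step.U) : ∃ t, w = Step.U :: t := by
  cases w with
  | nil => simp at h
  | cons c t => rw [List.head?_cons, Option.some_inj] at h; exact ⟨t, by rw [h]⟩

lemma prefix_left_of (k : ℕ) {s w₂ : List Step} (hs : ∀ c ∈ s, c ≠ Step.U)
    (hw : w₂ = [] ∨ w₂.head? = some Step.U)
    (hg : (List.replicate k Step.D ++ [Step.L]) <+: s ++ w₂) :
    (List.replicate k Step.D ++ [Step.L]) <+: s := by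
  set g : List Step := List.replicate k Step.D ++ [Step.L] with hgdef
  by_cases hlen : g.length ≤ s.length
  · have heq := List.prefix_iff_eq_take.1 hg
    rw [List.take_append, Nat.sub_eq_zero_of_le hlen, List.take_zero,
      List.append_nil] at heq
    rw [heq]
    exact List.take_prefix _ s
  · exfalso
    push_neg at hlen
    rcases hw with rfl | hw
    · rw [List.append_nil] at hg
      exact absurd (hg.length_le) (by omega)
    · obtain ⟨t, rfl⟩ := head_eq_U hw
      have heq := List.prefix_iff_eq_take.1 hg
      rw [List.take_append] at heq
      have hU : Step.U ∈ g := by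
        rw [heq]
        apply List.mem_append_right
        obtain ⟨d, hd⟩ : ∃ d, g.length - s.length = d + 1 := ⟨g.length - s.length - 1, by omega⟩
        rw [hd, List.take_succ_cons]
        exact List.mem_cons_self
      rw [hgdef] at hU
      rcases List.mem_append.1 hU with h | h
      · exact absurd (List.eq_of_mem_replicate h) (by simp)
      · simp at h

/-! ### core structure lemma -/

lemma core (k : ℕ) (hk : 1 ≤ k) :
    ∀ N, ∀ w : List Step, w.length ≤ N → ∀ n : ℕ,
    w ≠ [] → ¬ [Step.U, Step.L] <:+: w → ¬ [Step.L, Step.U] <:+: w →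
    w.head? = some Step.U → w.getLast? ≠ some Step.U →
    occ (boxFactor k) w = n → countD w + countL w + 1 ≤ (k+2) * n →
    ∃ a : List ℕ, a.length = n ∧ (∀ x ∈ a, 0 < x) ∧ w = boxForm k a ∧
      countD w + countL w = (k+2) * n - 1 := by
  intro N
  induction N with
  | zero =>
    intro w hw n hne _ _ _ _ _ _
    exact absurd (List.length_eq_zero_iff.1 (Nat.le_zero.1 hw)) hne
  | succ N ih =>
    intro w hwN n hne hUL hLU hhead hlast hocc hbound
    obtain ⟨m, r, rfl, hr⟩ := exists_maxU w
    have hm : 1 ≤ m := by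
      rcases Nat.eq_zero_or_pos m with rfl | h
      · rw [List.replicate_zero, List.nil_append] at hne hhead
        rcases hr with rfl | hr
        · exact absurd rfl hne
        · exact absurd hhead hr
      · exact h
    obtain ⟨m', rfl⟩ : ∃ m', m = m' + 1 := ⟨m - 1, by omega⟩
    rcases hr with rfl | hrU
    · -- w = replicate (m'+1) U, last letter U : contradiction
      exfalso
      apply hlast
      rw [List.append_nil, List.replicate_succ', List.getLast?_concat]
    -- r ≠ [], head of r is not U
    obtain ⟨s, w₂, rfl, hsU, hw₂⟩ := exists_maxDown r
    have hsne : s ≠ [] := by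
      rintro rfl
      rw [List.nil_append] at hrU
      rcases hw₂ with rfl | hw₂
      · apply hlast
        simp only [List.append_nil, List.replicate_succ', List.getLast?_concat]
      · exact hrU hw₂
    -- occurrences
    have hoccw : occ (boxFactor k) (List.replicate (m'+1) Step.U ++ (s ++ w₂)) =
        (if (List.replicate k Step.D ++ [Step.L]) <+: s ++ w₂ then 1 else 0) +
          occ (boxFactor k) w₂ := by
      rw [occ_repU_succ k hk, occ_noU_append k hsU]
    -- down counts
    have hdownw : countD (List.replicate (m'+1) Step.U ++ (s ++ w₂)) +
        countL (List.replicate (m'+1) Step.U ++ (s ++ w₂)) =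
        s.length + (countD w₂ + countL w₂) := by
      unfold countD countL
      simp only [List.count_append, List.count_replicate]
      have := count_eq_len hsU
      unfold countD countL at this
      simp only [show (Step.U == Step.D) = false from rfl,
        show (Step.U == Step.L) = false from rfl]
      simp
      omega
    have hslen : 1 ≤ s.length := List.length_pos_iff.2 hsne
    by_cases hg : (List.replicate k Step.D ++ [Step.L]) <+: s ++ w₂
    · -- box occurrence at the first descent
      rw [if_pos hg] at hoccw
      have hgs := prefix_left_of k hsU hw₂ hg
      obtain ⟨s', rfl⟩ := hgs
      rcases hw₂ with rfl | hw₂head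
      · -- w₂ empty : n = 1, s' = []
        rw [occ_nil _ (by simp [boxFactor])] at hoccw
        rw [hoccw] at hocc
        subst hocc
        have hzero : countD ([] : List Step) + countL ([] : List Step) = 0 := rfl
        have hsum : ((List.replicate k Step.D ++ [Step.L]) ++ s').length =
            k + 1 + s'.length := by
          simp only [List.length_append, List.length_replicate, List.length_cons,
            List.length_nil]
          all_goals omega
        rw [hdownw, hzero, hsum] at hbound
        have hs'0 : s' = [] := List.length_eq_zero_iff.1 (by omega)
        subst hs'0
        refine ⟨[m' + 1], by simp, by simp, ?_, ?_⟩
        · rw [boxForm_single]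
          simp
        · rw [hdownw, hzero, hsum]
          simp
          all_goals omega
      · -- w₂ nonempty, starts with U
        obtain ⟨t, rfl⟩ := head_eq_U hw₂head
        have hs'ne : s' ≠ [] := by
          rintro rfl
          apply hLU
          refine ⟨List.replicate (m'+1) Step.U ++ List.replicate k Step.D, t, ?_⟩
          simp
        obtain ⟨n', rfl⟩ : ∃ n', n = n' + 1 := ⟨n - 1, by omega⟩
        have hocc₂ : occ (boxFactor k) (Step.U :: t) = n' := by omega
        have hmul : (k+2) * (n'+1) = (k+2) * n' + k + 2 := by ring
        have hs'len : 1 ≤ s'.length := List.length_pos_iff.2 hs'ne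
        have hglen : (List.replicate k Step.D ++ [Step.L]).length = k + 1 := by simp
        have hsum : ((List.replicate k Step.D ++ [Step.L]) ++ s').length =
            k + 1 + s'.length := by
          simp only [List.length_append, List.length_replicate, List.length_cons,
            List.length_nil]
          all_goals omega
        -- apply IH to w₂ = U :: t
        have hW2 : ∃ a : List ℕ, a.length = n' ∧ (∀ x ∈ a, 0 < x) ∧
            (Step.U :: t) = boxForm k a ∧
            countD (Step.U :: t) + countL (Step.U :: t) = (k+2) * n' - 1 := by
          apply ih
          · have := hwN
            simp only [List.length_append, List.length_replicate, List.length_cons] at this ⊢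
            omega
          · simp
          · intro h
            exact hUL (h.trans (List.IsSuffix.isInfix
              ⟨List.replicate (m'+1) Step.U ++ ((List.replicate k Step.D ++ [Step.L]) ++ s'),
                by simp⟩))
          · intro h
            exact hLU (h.trans (List.IsSuffix.isInfix
              ⟨List.replicate (m'+1) Step.U ++ ((List.replicate k Step.D ++ [Step.L]) ++ s'),
                by simp⟩))
          · simp
          · intro h
            exact hlast (by rw [getLast?_append_ne _ (by simp),
              getLast?_append_ne _ (by simp)]; exact h)
          · exact hocc₂
          · rw [hdownw, hsum] at hbound
            set M' := (k+2) * n'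
            omega
        obtain ⟨a, halen, hapos, haeq, hadown⟩ := hW2
        have hane : a ≠ [] := by
          rintro rfl
          rw [show boxForm k [] = [] from rfl] at haeq
          simp at haeq
        obtain ⟨a1, rest, rfl⟩ : ∃ a1 rest, a = a1 :: rest :=
          ⟨a.head (by exact hane), a.tail, by simp [hane]⟩
        have hn'pos : 1 ≤ n' := by rw [← halen]; simp
        have hM'pos : 1 ≤ (k+2) * n' := Nat.mul_pos (by omega) (by omega)
        -- s' has length exactly 1
        have hs'1 : s'.length = 1 := by
          rw [hdownw, hsum, hadown] at hbound
          set M' := (k+2) * n'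
          omega
        obtain ⟨x, rfl⟩ : ∃ x, s' = [x] := by
          cases s' with
          | nil => simp at hs'1
          | cons x xs =>
            simp at hs'1
            exact ⟨x, by rw [hs'1]⟩
        have hxD : x = Step.D := by
          have hxU : x ≠ Step.U := hsU x (by simp)
          cases x with
          | U => exact absurd rfl hxU
          | D => rfl
          | L =>
            exfalso
            apply hLU
            refine ⟨List.replicate (m'+1) Step.U ++ (List.replicate k Step.D ++ [Step.L]), t, ?_⟩
            simp
        subst hxD
        refine ⟨(m' + 1) :: a1 :: rest, by simp [halen], ?_, ?_, ?_⟩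
        · intro y hy
          rcases List.mem_cons.1 hy with rfl | hy
          · omega
          · exact hapos y hy
        · rw [boxForm_cons_cons, ← haeq]
          simp
        · rw [hdownw, hsum, hadown, hmul]
          set M' := (k+2) * n'
          omega
    · -- no box occurrence here : contradiction
      rw [if_neg hg] at hoccw
      rw [hoccw] at hocc
      rcases hw₂ with rfl | hw₂head
      · rw [occ_nil _ (by simp [boxFactor])] at hocc
        rw [← hocc, Nat.mul_zero] at hbound
        omega
      · obtain ⟨t, rfl⟩ := head_eq_U hw₂head
        have hW2 : ∃ a : List ℕ, a.length = n ∧ (∀ x ∈ a, 0 < x) ∧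
            (Step.U :: t) = boxForm k a ∧
            countD (Step.U :: t) + countL (Step.U :: t) = (k+2) * n - 1 := by
          apply ih
          · have := hwN
            simp only [List.length_append, List.length_replicate, List.length_cons] at this ⊢
            omega
          · simp
          · intro h
            exact hUL (h.trans (List.IsSuffix.isInfix
              ⟨List.replicate (m'+1) Step.U ++ s, by simp⟩))
          · intro h
            exact hLU (h.trans (List.IsSuffix.isInfix
              ⟨List.replicate (m'+1) Step.U ++ s, by simp⟩))
          · simp
          · intro h
            exact hlast (by rw [getLast?_append_ne _ (by simp),
              getLast?_append_ne _ (by simp)]; exact h)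
          · omega
          · rw [hdownw] at hbound
            set M := (k+2) * n
            omega
        obtain ⟨a, halen, hapos, haeq, hadown⟩ := hW2
        exfalso
        have hane : a ≠ [] := by
          rintro rfl
          rw [show boxForm k [] = [] from rfl] at haeq
          simp at haeq
        have hnpos : 1 ≤ n := by rw [← halen]; exact List.length_pos_iff.2 hane
        have hMpos : 1 ≤ (k+2) * n := Nat.mul_pos (by omega) (by omega)
        rw [hdownw, hadown] at hbound
        set M := (k+2) * n
        omega

/-- Structure of `k`-box paths: every `k`-box path of size `n` is of the form
`U^{a_1} D^k L D ⋯ U^{a_{n-1}} D^k L D U^{a_n} D^k L` with positive `a_i`;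
conversely any word of this form with `a_1 + ⋯ + a_n = (k+2)n - 1` satisfying the
prefix condition is a `k`-box path of size `n`. -/

theorem statement1 (k n : ℕ) (hk : 1 ≤ k) (hn : 1 ≤ n) :
    (∀ w : List Step, IsBoxPath k n w →
      ∃ a : List ℕ, a.length = n ∧ (∀ x ∈ a, 0 < x) ∧ w = boxForm k a) ∧
    (∀ a : List ℕ, a.length = n → (∀ x ∈ a, 0 < x) → a.sum = (k+2)*n - 1 →
      (∀ p, p <+: boxForm k a → countD p + countL p ≤ countU p) →
      IsBoxPath k n (boxForm k a)) := by
  constructor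
  · rintro w ⟨⟨hpre, hbal, hUL, hLU⟩, hsem, hocc⟩
    rw [semilength] at hsem
    have hM : 3 ≤ (k+2) * n := by
      have h := Nat.mul_le_mul (show 3 ≤ k + 2 by omega) hn
      simpa using h
    have hne : w ≠ [] := by
      rintro rfl
      rw [show countU ([] : List Step) = 0 from rfl] at hsem
      omega
    have hheadU : w.head? = some Step.U := by
      obtain ⟨c, t, rfl⟩ : ∃ c t, w = c :: t := by
        cases w with
        | nil => exact absurd rfl hne
        | cons c t => exact ⟨c, t, rfl⟩
      have hp := hpre [c] ⟨t, rfl⟩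
      cases c with
      | U => rfl
      | D => simp [countD, countL, countU, List.count_cons, List.count_nil] at hp
      | L => simp [countD, countL, countU, List.count_cons, List.count_nil] at hp
    have hlast : w.getLast? ≠ some Step.U := by
      intro h
      have hg : w.getLast hne = Step.U := by
        have h2 := List.getLast?_eq_getLast hne
        rw [h] at h2
        exact (Option.some_inj.1 h2).symm
      have hw' := List.dropLast_append_getLast hne
      rw [hg] at hw'
      have hp := hpre w.dropLast ⟨[Step.U], hw'⟩
      have h1 : countU w = countU w.dropLast + 1 := by
        conv_lhs => rw [← hw']
        unfold countU
        simp [List.count_append]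
      have h2 : countD w = countD w.dropLast := by
        conv_lhs => rw [← hw']
        unfold countD
        simp [List.count_append]
      have h3 : countL w = countL w.dropLast := by
        conv_lhs => rw [← hw']
        unfold countL
        simp [List.count_append]
      set M := (k+2) * n
      omega
    rw [numOccurrences_eq_occ] at hocc
    have hbound : countD w + countL w + 1 ≤ (k+2) * n := by
      set M := (k+2) * n
      omega
    obtain ⟨a, h1, h2, h3, _⟩ := core k hk w.length w le_rfl n hne hUL hLU hheadU hlast
      hocc hbound
    exact ⟨a, h1, h2, h3⟩
  · intro a hlen hpos hsum hpre
    have hch := chain'_boxForm k hk a hpos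
    refine ⟨⟨hpre, ?_, ?_, ?_⟩, ?_, ?_⟩
    · rw [countU_boxForm, countD_boxForm, countL_boxForm, hlen, hsum]
      have h2 : (k+2) * n = k * n + 2 * n := by ring
      omega
    · exact not_infix_of_chain' hch (by simp [StepR])
    · exact not_infix_of_chain' hch (by simp [StepR])
    · rw [semilength, countU_boxForm, hsum]
    · rw [numOccurrences_eq_occ, occ_boxForm k hk a hpos, hlen]
end

section
/- For all integers k ≥ 1 and n ≥ 1, the number of k-box paths of size n equals binom((k+2)n − 1, n) / ((k+2)n − 1); equivalently, ((k+2)n − 1) times the number of k-box paths of size n equals binom((k+2)n − 1, n). -/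
open Step List

abbrev dns (w : List Step) : ℕ := countD w + countL w

/-- prefix condition with offset h -/
def Pref (h : ℕ) (w : List Step) : Prop := ∀ p, p <+: w → dns p ≤ countU p + h

lemma cU_cons (c : Step) (w : List Step) : countU (c :: w) = (if c = U then 1 else 0) + countU w := by
  cases c <;> simp [countU, List.count_cons] <;> omega

lemma dns_cons (c : Step) (w : List Step) :
    dns (c :: w) = (if c = U then 0 else 1) + dns w := by
  cases c <;> simp [dns, countD, countL, List.count_cons] <;> omega

lemma cU_append (x y : List Step) : countU (x ++ y) = countU x + countU y := by
  simp [countU]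

lemma dns_append (x y : List Step) : dns (x ++ y) = dns x + dns y := by
  simp [dns, countD, countL]; omega

lemma cU_repl_U (a : ℕ) : countU (List.replicate a U) = a := by
  simp [countU, List.count_replicate]

lemma cU_repl_D (a : ℕ) : countU (List.replicate a D) = 0 := by
  simp [countU, List.count_replicate]

lemma dns_repl_U (a : ℕ) : dns (List.replicate a U) = 0 := by
  simp [dns, countD, countL, List.count_replicate]

lemma dns_repl_D (a : ℕ) : dns (List.replicate a D) = a := by
  simp [dns, countD, countL, List.count_replicate]

lemma cU_L : countU [L] = 0 := by simp [countU]
lemma dns_L : dns [L] = 1 := by simp [dns, countD, countL]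
lemma cU_D : countU [D] = 0 := by simp [countU]
lemma dns_D : dns [D] = 1 := by simp [dns, countD, countL]

/-- occurrence count recursion -/
lemma nOcc_nil (f : List Step) (hf : f ≠ []) : numOccurrences f [] = 0 := by
  simp [numOccurrences, List.prefix_nil, hf]

lemma nOcc_cons (f : List Step) (c : Step) (w : List Step) :
    numOccurrences f (c :: w) = (if f <+: c :: w then 1 else 0) + numOccurrences f w := by
  simp only [numOccurrences, Finset.card_filter]
  rw [List.length_cons]
  rw [Finset.sum_range_succ']
  simp only [List.drop_succ_cons, List.drop_zero]
  omega

lemma boxFactor_ne_nil (k : ℕ) : boxFactor k ≠ [] := by simp [boxFactor]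

lemma nOcc_cons_D (k : ℕ) (w : List Step) :
    numOccurrences (boxFactor k) (D :: w) = numOccurrences (boxFactor k) w := by
  rw [nOcc_cons]
  have : ¬ boxFactor k <+: D :: w := by
    intro h; rw [boxFactor, List.cons_prefix_cons] at h; exact absurd h.1 (by simp)
  simp [this]

lemma nOcc_cons_L (k : ℕ) (w : List Step) :
    numOccurrences (boxFactor k) (L :: w) = numOccurrences (boxFactor k) w := by
  rw [nOcc_cons]
  have : ¬ boxFactor k <+: L :: w := by
    intro h; rw [boxFactor, List.cons_prefix_cons] at h; exact absurd h.1 (by simp)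
  simp [this]

lemma nOcc_repl_D (k j : ℕ) (w : List Step) :
    numOccurrences (boxFactor k) (List.replicate j D ++ w) = numOccurrences (boxFactor k) w := by
  induction j with
  | zero => simp
  | succ m ih => rw [List.replicate_succ, List.cons_append, nOcc_cons_D, ih]

lemma nOcc_boxFactor_append (k : ℕ) (hk : 1 ≤ k) (w : List Step) :
    numOccurrences (boxFactor k) (boxFactor k ++ w) =
      numOccurrences (boxFactor k) w + 1 := by
  have h1 : boxFactor k ++ w = U :: (List.replicate k D ++ (L :: w)) := by
    simp [boxFactor]
  rw [h1, nOcc_cons]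
  have hp : boxFactor k <+: U :: (List.replicate k D ++ (L :: w)) := by
    rw [boxFactor, List.cons_prefix_cons]
    exact ⟨rfl, by simpa using (List.prefix_append _ (w))⟩
  rw [if_pos hp, nOcc_repl_D, nOcc_cons_L]
  omega
/-- no UL / LU factors -/
def NoF (w : List Step) : Prop := ¬ [U, L] <:+: w ∧ ¬ [L, U] <:+: w

lemma NoF_of_suffix {w v : List Step} (h : NoF w) (hs : v <:+: w) : NoF v :=
  ⟨fun hi => h.1 (hi.trans hs), fun hi => h.2 (hi.trans hs)⟩

lemma NoF_cons {c : Step} {w : List Step} (h : NoF (c :: w)) : NoF w :=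
  NoF_of_suffix h (List.infix_cons (List.infix_refl w))

lemma NoF_append_right {x w : List Step} (h : NoF (x ++ w)) : NoF w :=
  NoF_of_suffix h ((List.suffix_append x w).isInfix)

lemma pref_consU {h : ℕ} {w : List Step} (H : Pref h (U :: w)) : Pref (h+1) w := by
  intro p hp
  have := H (U :: p) (by simpa using hp)
  rw [dns_cons, cU_cons] at this
  simp at this; omega

lemma pref_consD {h : ℕ} {w : List Step} (H : Pref h (D :: w)) :
    ∃ h', h = h' + 1 ∧ Pref h' w := by
  have h1 : 1 ≤ h := by
    have := H [D] ⟨w, rfl⟩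
    rw [dns_D, cU_D] at this; omega
  refine ⟨h - 1, by omega, fun p hp => ?_⟩
  have := H (D :: p) (by simpa using hp)
  rw [dns_cons, cU_cons] at this
  simp at this; omega

lemma pref_consL {h : ℕ} {w : List Step} (H : Pref h (L :: w)) :
    ∃ h', h = h' + 1 ∧ Pref h' w := by
  have h1 : 1 ≤ h := by
    have := H [L] ⟨w, rfl⟩
    rw [dns_L, cU_L] at this; omega
  refine ⟨h - 1, by omega, fun p hp => ?_⟩
  have := H (L :: p) (by simpa using hp)
  rw [dns_cons, cU_cons] at this
  simp at this; omega

lemma pref_replD {h j : ℕ} {w : List Step} (H : Pref h (List.replicate j D ++ w)) :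
    ∃ h', h = h' + j ∧ Pref h' w := by
  induction j generalizing h with
  | zero => exact ⟨h, by omega, by simpa using H⟩
  | succ m ih =>
    rw [List.replicate_succ, List.cons_append] at H
    obtain ⟨h1, rfl, H1⟩ := pref_consD H
    obtain ⟨h', rfl, H'⟩ := ih H1
    exact ⟨h', by omega, H'⟩

lemma bal_consU {h : ℕ} {w : List Step} (H : dns (U :: w) = countU (U :: w) + h) :
    dns w = countU w + (h + 1) := by
  rw [dns_cons, cU_cons] at H; simp at H; omega

lemma bal_consD {h : ℕ} {w : List Step} (H : dns (D :: w) = countU (D :: w) + h) :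
    dns w + 1 = countU w + h := by
  rw [dns_cons, cU_cons] at H; simp at H; omega

lemma bal_consL {h : ℕ} {w : List Step} (H : dns (L :: w) = countU (L :: w) + h) :
    dns w + 1 = countU w + h := by
  rw [dns_cons, cU_cons] at H; simp at H; omega
lemma boxForm_cons_succ (k a : ℕ) (r : List ℕ) :
    boxForm k ((a+1) :: r) = U :: boxForm k (a :: r) := by
  cases r <;> simp [boxForm, List.replicate_succ]

lemma boxForm_one (k : ℕ) : boxForm k [1] = boxFactor k := by
  simp [boxForm, boxFactor]

lemma boxForm_one_cons (k b₀ : ℕ) (b' : List ℕ) :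
    boxForm k (1 :: b₀ :: b') = boxFactor k ++ (D :: boxForm k (b₀ :: b')) := by
  simp [boxForm, boxFactor]

lemma key (k : ℕ) (hk : 1 ≤ k) (m : ℕ) :
    ∀ w : List Step, w.length ≤ m → ∀ h : ℕ, Pref h w → dns w = countU w + h → NoF w →
    ((k+2) * numOccurrences (boxFactor k) w ≤ countU w + h + 1 ∧
    ((k+2) * numOccurrences (boxFactor k) w = countU w + h + 1 →
      ∃ b : List ℕ, (∀ x ∈ b, 1 ≤ x) ∧ b.length = numOccurrences (boxFactor k) w ∧
        w = boxForm k b)) := by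
  induction m with
  | zero =>
    intro w hlen h _ _ _
    have : w = [] := List.length_eq_zero_iff.mp (by omega)
    subst this
    rw [nOcc_nil _ (boxFactor_ne_nil k)]
    exact ⟨by omega, fun he => by simp [countU] at he⟩
  | succ M IH =>
    intro w hlen h HP HB HF
    rcases w with _ | ⟨c, w₁⟩
    · rw [nOcc_nil _ (boxFactor_ne_nil k)]
      exact ⟨by omega, fun he => by simp [countU] at he⟩
    cases c
    case D =>
      obtain ⟨h', rfl, HP'⟩ := pref_consD HP
      have HB' : dns w₁ = countU w₁ + h' := by have := bal_consD HB; omega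
      obtain ⟨ineq, _⟩ := IH w₁ (by simp at hlen ⊢; omega) h' HP' HB' (NoF_cons HF)
      rw [nOcc_cons_D]
      have hcu : countU (D :: w₁) = countU w₁ := by rw [cU_cons]; simp
      rw [hcu]
      exact ⟨by omega, fun he => by omega⟩
    case L =>
      obtain ⟨h', rfl, HP'⟩ := pref_consL HP
      have HB' : dns w₁ = countU w₁ + h' := by have := bal_consL HB; omega
      obtain ⟨ineq, _⟩ := IH w₁ (by simp at hlen ⊢; omega) h' HP' HB' (NoF_cons HF)
      rw [nOcc_cons_L]
      have hcu : countU (L :: w₁) = countU w₁ := by rw [cU_cons]; simp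
      rw [hcu]
      exact ⟨by omega, fun he => by omega⟩
    case U =>
      have hcu : countU (U :: w₁) = 1 + countU w₁ := by rw [cU_cons]; simp
      by_cases hbox : boxFactor k <+: U :: w₁
      · -- starts with a box
        obtain ⟨w₂, hw2⟩ := hbox
        have hw1 : w₁ = List.replicate k D ++ (L :: w₂) := by
          have h2 : U :: (List.replicate k D ++ (L :: w₂)) = U :: w₁ := by
            simpa [boxFactor] using hw2
          exact (List.cons.injEq _ _ _ _ ▸ h2).2.symm
        have hwrw : U :: w₁ = boxFactor k ++ w₂ := hw2.symm
        have hocc : numOccurrences (boxFactor k) (U :: w₁) =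
            numOccurrences (boxFactor k) w₂ + 1 := by
          rw [hwrw, nOcc_boxFactor_append k hk]
        have hcu2 : countU (U :: w₁) = 1 + countU w₂ := by
          rw [hwrw, cU_append]
          simp [boxFactor, countU, List.count_cons, List.count_replicate]
        -- prefix/balance through the box
        obtain ⟨h1, hh1, HP1⟩ := pref_replD (pref_consU (hw1 ▸ HP))
        obtain ⟨h2, rfl, HP2⟩ := pref_consL HP1
        have HB2 : dns w₂ = countU w₂ + h2 := by
          have HBx := bal_consU HB
          rw [hw1, dns_append, cU_append, dns_repl_D, cU_repl_D, dns_cons, cU_cons] at HBx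
          simp at HBx; omega
        have hlen2 : w₂.length ≤ M := by
          rw [hwrw] at hlen; rw [List.length_append] at hlen
          simp [boxFactor] at hlen; omega
        have HF2 : NoF w₂ := by
          have : NoF (L :: w₂) := NoF_append_right (x := U :: List.replicate k D)
            (by rw [List.cons_append, ← hw1]; exact HF)
          exact NoF_cons this
        rcases w₂ with _ | ⟨c2, w₃⟩
        · -- w = boxFactor exactly
          have hocc1 : numOccurrences (boxFactor k) (U :: w₁) = 1 := by
            rw [hocc, nOcc_nil _ (boxFactor_ne_nil k)]
          have hh2 : h2 = 0 := by simp [dns, countU, countD, countL] at HB2; omega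
          rw [hocc1, hcu2]
          simp only [countU, List.count_nil]
          constructor
          · omega
          · intro he
            refine ⟨[1], by simp, by simp [hocc1], ?_⟩
            rw [boxForm_one, hwrw]; simp
        · cases c2
          ·
            exfalso
            apply HF.2
            refine ⟨U :: List.replicate k D, w₃, ?_⟩
            rw [hwrw]; simp [boxFactor]
          · obtain ⟨h3, rfl, HP3⟩ := pref_consD HP2
            have HB3 : dns w₃ = countU w₃ + h3 := by have := bal_consD HB2; omega
            obtain ⟨ineq, heq⟩ := IH w₃ (by simp at hlen2 ⊢; omega) h3 HP3 HB3 (NoF_cons HF2)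
            rw [hocc, nOcc_cons_D, hcu2]
            have hcu3 : countU (D :: w₃) = countU w₃ := by rw [cU_cons]; simp
            rw [hcu3]
            constructor
            · have : (k+2) * (numOccurrences (boxFactor k) w₃ + 1) =
                (k+2) * numOccurrences (boxFactor k) w₃ + (k+2) := by ring
              omega
            · intro he
              have he3 : (k+2) * numOccurrences (boxFactor k) w₃ = countU w₃ + h3 + 1 := by
                have : (k+2) * (numOccurrences (boxFactor k) w₃ + 1) =
                  (k+2) * numOccurrences (boxFactor k) w₃ + (k+2) := by ring
                omega
              obtain ⟨b, hpos, hlenb, hform⟩ := heq he3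
              rcases b with _ | ⟨b₀, b'⟩
              · exfalso
                have : w₃ = [] := by simpa [boxForm] using hform
                subst this
                rw [nOcc_nil _ (boxFactor_ne_nil k)] at he3
                simp [countU] at he3
              · refine ⟨1 :: b₀ :: b', ?_, by simp at hlenb ⊢; omega, ?_⟩
                · intro x hx; rcases List.mem_cons.mp hx with rfl | hx
                  · omega
                  · exact hpos x hx
                · rw [boxForm_one_cons, ← hform, hwrw]
          · obtain ⟨h3, rfl, HP3⟩ := pref_consL HP2
            have HB3 : dns w₃ = countU w₃ + h3 := by have := bal_consL HB2; omega
            obtain ⟨ineq, heq⟩ := IH w₃ (by simp at hlen2 ⊢; omega) h3 HP3 HB3 (NoF_cons HF2)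
            rw [hocc, nOcc_cons_L, hcu2]
            have hcu3 : countU (L :: w₃) = countU w₃ := by rw [cU_cons]; simp
            rw [hcu3]
            constructor
            · have : (k+2) * (numOccurrences (boxFactor k) w₃ + 1) =
                (k+2) * numOccurrences (boxFactor k) w₃ + (k+2) := by ring
              omega
            · intro he
              exfalso
              have he3 : (k+2) * numOccurrences (boxFactor k) w₃ = countU w₃ + h3 + 1 := by
                have : (k+2) * (numOccurrences (boxFactor k) w₃ + 1) =
                  (k+2) * numOccurrences (boxFactor k) w₃ + (k+2) := by ring
                omega
              obtain ⟨b, hpos, hlenb, hform⟩ := heq he3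
              rcases b with _ | ⟨b₀, b'⟩
              · have : w₃ = [] := by simpa [boxForm] using hform
                subst this
                rw [nOcc_nil _ (boxFactor_ne_nil k)] at he3
                simp [countU] at he3
              · have hb₀ : 1 ≤ b₀ := hpos b₀ List.mem_cons_self
                obtain ⟨c', rfl⟩ : ∃ c', b₀ = c' + 1 := ⟨b₀ - 1, by omega⟩
                rw [boxForm_cons_succ] at hform
                apply HF.2
                refine ⟨boxFactor k, boxForm k (c' :: b'), ?_⟩
                rw [hwrw, hform]; simp
      · -- no box at start
        have hocc : numOccurrences (boxFactor k) (U :: w₁) = numOccurrences (boxFactor k) w₁ := by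
          rw [nOcc_cons, if_neg hbox, zero_add]
        obtain ⟨ineq, heq⟩ := IH w₁ (by simp at hlen ⊢; omega)
          (h+1) (pref_consU HP) (bal_consU HB) (NoF_cons HF)
        rw [hocc, hcu]
        refine ⟨by omega, fun he => ?_⟩
        obtain ⟨b, hpos, hlenb, hform⟩ := heq (by omega)
        rcases b with _ | ⟨b₀, b'⟩
        · exfalso
          have : w₁ = [] := by simpa [boxForm] using hform
          subst this
          rw [nOcc_nil _ (boxFactor_ne_nil k)] at he
          simp [countU] at he
        · refine ⟨(b₀+1) :: b', ?_, by simp at hlenb ⊢; omega, ?_⟩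
          · intro x hx; rcases List.mem_cons.mp hx with rfl | hx
            · omega
            · exact hpos x (List.mem_cons_of_mem _ hx)
          · rw [boxForm_cons_succ, ← hform]
lemma len_split (w : List Step) : countU w + countD w + countL w = w.length := by
  induction w with
  | nil => simp [countU, countD, countL]
  | cons c t ih => cases c <;> simp [countU, countD, countL, List.count_cons] at * <;> omega

lemma dns_le_len (w : List Step) : dns w ≤ w.length := by
  have := len_split w; unfold dns; omega

lemma pref_short {h : ℕ} {w : List Step} (hw : w.length ≤ h) : Pref h w := by
  intro p hp
  have := dns_le_len p
  have := hp.length_le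
  omega

lemma pref_replU (h a : ℕ) : Pref h (List.replicate a U) := by
  intro p hp
  have hd : countD p = 0 := by
    rw [countD, List.count_eq_zero]
    intro hm
    have := List.eq_of_mem_replicate (hp.sublist.mem hm)
    simp at this
  have hl : countL p = 0 := by
    rw [countL, List.count_eq_zero]
    intro hm
    have := List.eq_of_mem_replicate (hp.sublist.mem hm)
    simp at this
  unfold dns; omega

lemma pref_append {X Y : List Step} {h h' : ℕ}
    (hX : Pref h X) (hbal : countU X + h = dns X + h') (hY : Pref h' Y) :
    Pref h (X ++ Y) := by
  intro p hp
  obtain ⟨t, ht⟩ := hp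
  rcases List.append_eq_append_iff.mp ht with ⟨a', ha1, _⟩ | ⟨c', hc1, hc2⟩
  · exact hX p ⟨a', ha1.symm⟩
  · subst hc1
    have hcY : c' <+: Y := ⟨t, hc2.symm⟩
    have := hY c' hcY
    rw [dns_append, cU_append]
    omega

/-- counts of boxForm -/
lemma cU_boxForm (k : ℕ) : ∀ b : List ℕ, countU (boxForm k b) = b.sum := by
  intro b
  induction b with
  | nil => simp [boxForm, countU]
  | cons a r ih =>
    rcases r with _ | ⟨b₀, r'⟩
    · simp [boxForm, cU_append, cU_repl_U, cU_repl_D, countU, List.count_replicate]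
    · rw [boxForm]
      rw [cU_append, cU_append, cU_append, cU_repl_U, cU_repl_D] at *
      simp [countU, List.count_cons] at *
      omega

lemma dns_boxForm (k : ℕ) : ∀ b : List ℕ, b ≠ [] →
    dns (boxForm k b) + 1 = (k+2) * b.length := by
  intro b
  induction b with
  | nil => simp
  | cons a r ih =>
    intro _
    rcases r with _ | ⟨b₀, r'⟩
    · simp [boxForm, dns_append, dns_repl_U, dns_repl_D, dns, countD, countL,
        List.count_replicate]
    · rw [boxForm]
      have hih := ih (by simp)
      rw [dns_append, dns_append, dns_append, dns_repl_U, dns_repl_D]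
      simp only [List.length_cons] at *
      simp [dns, countD, countL, List.count_cons, List.count_replicate] at *
      have hexp : (k+2)*(r'.length+1+1) = (k+2)*(r'.length+1) + (k+2) := by ring
      omega

/-- occurrences in one block -/
lemma nOcc_block (k : ℕ) (hk : 1 ≤ k) (a : ℕ) (t : List Step) :
    numOccurrences (boxFactor k) (List.replicate a U ++ (List.replicate k D ++ (L :: t)))
      = (if a = 0 then 0 else 1) + numOccurrences (boxFactor k) t := by
  induction a with
  | zero =>
    simp only [List.replicate, List.nil_append]
    rw [nOcc_repl_D, nOcc_cons_L]
    simp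
  | succ m ih =>
    rw [List.replicate_succ, List.cons_append, nOcc_cons, ih]
    rcases m with _ | i
    · have hp : boxFactor k <+: U :: (List.replicate 0 U ++ (List.replicate k D ++ (L :: t))) := by
        rw [boxFactor, List.cons_prefix_cons]
        exact ⟨rfl, by simp only [List.replicate, List.nil_append]; exact ⟨t, by simp⟩⟩
      rw [if_pos hp]
      simp
    · have hp : ¬ (boxFactor k <+: U ::
          (List.replicate (i+1) U ++ (List.replicate k D ++ (L :: t)))) := by
        rw [boxFactor, List.cons_prefix_cons]
        rintro ⟨-, hpre⟩
        obtain ⟨j, rfl⟩ : ∃ j, k = j + 1 := ⟨k - 1, by omega⟩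
        rw [List.replicate_succ, List.replicate_succ (n := i), List.cons_append,
          List.cons_append, List.cons_prefix_cons] at hpre
        exact absurd hpre.1 (by simp)
      rw [if_neg hp]
      simp

lemma nOcc_boxForm (k : ℕ) (hk : 1 ≤ k) : ∀ b : List ℕ, (∀ x ∈ b, 1 ≤ x) →
    numOccurrences (boxFactor k) (boxForm k b) = b.length := by
  intro b
  induction b with
  | nil => intro _; simp [boxForm, nOcc_nil _ (boxFactor_ne_nil k)]
  | cons a r ih =>
    intro hpos
    have ha : a ≠ 0 := by have := hpos a List.mem_cons_self; omega
    rcases r with _ | ⟨b₀, r'⟩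
    · have : boxForm k [a] = List.replicate a U ++ (List.replicate k D ++ (L :: [])) := by
        simp [boxForm]
      rw [this, nOcc_block k hk, if_neg ha, nOcc_nil _ (boxFactor_ne_nil k)]
      simp
    · have : boxForm k (a :: b₀ :: r') =
          List.replicate a U ++ (List.replicate k D ++ (L :: (D :: boxForm k (b₀ :: r')))) := by
        simp [boxForm]
      rw [this, nOcc_block k hk, if_neg ha, nOcc_cons_D,
        ih (fun x hx => hpos x (List.mem_cons_of_mem _ hx))]
      simp
      omega

/-- prefix condition for boxForm -/
lemma pref_boxForm (k : ℕ) : ∀ b : List ℕ, ∀ h : ℕ, b ≠ [] →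
    (∀ i, i < b.length → (k+2)*i ≤ h + (b.take i).sum) →
    ((k+2)*b.length ≤ h + b.sum + 1) →
    Pref h (boxForm k b) := by
  intro b
  induction b with
  | nil => simp
  | cons a r ih =>
    intro h _ hmid hend
    rcases r with _ | ⟨b₀, r'⟩
    · -- single block U^a D^k [L]
      have hka : k + 1 ≤ h + a := by simp at hend; omega
      have : boxForm k [a] = List.replicate a U ++ (List.replicate k D ++ [L]) := by
        simp [boxForm]
      rw [this]
      refine pref_append (h' := h + a) (pref_replU h a) ?_ (pref_short ?_)
      · rw [cU_repl_U, dns_repl_U]; omega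
      · simp; omega
    · have h1 : k + 2 ≤ h + a := by
        have := hmid 1 (by simp)
        simpa using this
      have hsp : boxForm k (a :: b₀ :: r') =
          List.replicate a U ++ ((List.replicate k D ++ [L, D]) ++ boxForm k (b₀ :: r')) := by
        simp [boxForm]
      rw [hsp]
      refine pref_append (h' := h + a) (pref_replU h a)
        (by rw [cU_repl_U, dns_repl_U]; omega) ?_
      refine pref_append (h' := h + a - (k+2)) (pref_short (by simp; omega)) ?_ ?_
      · rw [cU_append, dns_append, dns_repl_D, cU_repl_D]
        simp [dns, countD, countL, countU]
        omega
      · refine ih _ (by simp) ?_ ?_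
        · intro i hi
          have hx : (k+2)*(i+1) = (k+2)*i + (k+2) := by ring
          have := hmid (i+1) (by simp at hi ⊢; omega)
          simp [List.sum_cons] at this ⊢
          omega
        · have hx : (k+2)*(r'.length + 1 + 1) = (k+2)*(r'.length + 1) + (k+2) := by ring
          have := hend
          simp [List.sum_cons] at this ⊢
          omega

/-- no forbidden factors in boxForm -/
def okR : Step → Step → Prop := fun x y => ¬(x = U ∧ y = L) ∧ ¬(x = L ∧ y = U)

lemma chain_to_NoF {w : List Step} (hc : List.Chain' okR w) : NoF w := by
  constructor
  · rintro ⟨s, t, rfl⟩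
    have h1 : List.Chain' okR (s ++ [U, L]) := (List.isChain_append.mp hc).1
    have h2 : List.Chain' okR [U, L] := (List.isChain_append.mp h1).2.1
    exact (List.isChain_cons_cons.mp h2).1.1 ⟨rfl, rfl⟩
  · rintro ⟨s, t, rfl⟩
    have h1 : List.Chain' okR (s ++ [L, U]) := (List.isChain_append.mp hc).1
    have h2 : List.Chain' okR [L, U] := (List.isChain_append.mp h1).2.1
    exact (List.isChain_cons_cons.mp h2).1.2 ⟨rfl, rfl⟩

lemma chain_repl (c : Step) (hc : okR c c) : ∀ a, List.Chain' okR (List.replicate a c) := by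
  intro a
  induction a with
  | zero => simp [List.Chain']
  | succ m ih =>
    rw [List.replicate_succ]
    exact List.isChain_cons.mpr ⟨fun y hy => by
      rcases m with _ | i
      · simp at hy
      · rw [List.replicate_succ] at hy; simp at hy; subst hy; exact hc, ih⟩

lemma chain_append' {x y : List Step} (hx : List.Chain' okR x) (hy : List.Chain' okR y)
    (hb : ∀ c d, x.getLast? = some c → y.head? = some d → okR c d) :
    List.Chain' okR (x ++ y) := by
  refine List.isChain_append.mpr ⟨hx, hy, ?_⟩
  intro c hc d hd
  exact hb c d hc hd

lemma okR_DU : okR D U := ⟨by simp, by simp⟩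
lemma okR_DL : okR D L := ⟨by simp, by simp⟩
lemma okR_DD : okR D D := ⟨by simp, by simp⟩
lemma okR_UD : okR U D := ⟨by simp, by simp⟩
lemma okR_UU : okR U U := ⟨by simp, by simp⟩
lemma okR_LD : okR L D := ⟨by simp, by simp⟩
lemma okR_LL : okR L L := ⟨by simp, by simp⟩
lemma okR_D (y : Step) : okR D y := ⟨by simp, by simp⟩

lemma chain_boxForm (k : ℕ) (hk : 1 ≤ k) : ∀ b : List ℕ,
    List.Chain' okR (boxForm k b) := by
  intro b
  induction b with
  | nil => simp [boxForm, List.Chain']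
  | cons a r ih =>
    have hU : List.Chain' okR (List.replicate a U) := chain_repl U okR_UU a
    have hD : List.Chain' okR (List.replicate k D) := chain_repl D okR_DD k
    have hheadD : (List.replicate k D).head? = some D := by
      obtain ⟨j, rfl⟩ : ∃ j, k = j + 1 := ⟨k - 1, by omega⟩
      simp [List.replicate_succ]
    have hlastU : ∀ c, (List.replicate a U).getLast? = some c → c = U := by
      intro c hc
      rcases a with _ | i
      · simp at hc
      · rw [List.replicate_succ'] at hc
        rw [List.getLast?_concat] at hc
        exact (Option.some_inj.mp hc).symm
    have hlastD : ∀ c, (List.replicate k D).getLast? = some c → c = D := by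
      intro c hc
      obtain ⟨j, rfl⟩ : ∃ j, k = j + 1 := ⟨k - 1, by omega⟩
      rw [List.replicate_succ'] at hc
      rw [List.getLast?_concat] at hc
      exact (Option.some_inj.mp hc).symm
    rcases r with _ | ⟨b₀, r'⟩
    · have : boxForm k [a] = List.replicate a U ++ (List.replicate k D ++ [L]) := by
        simp [boxForm]
      rw [this]
      refine chain_append' hU ?_ ?_
      · refine chain_append' hD (by simp [List.Chain']) ?_
        intro c d hc hd
        rw [hlastD c hc]; exact okR_D _
      · intro c d hc hd
        rw [hlastU c hc]
        rw [List.head?_append_of_ne_nil] at hd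
        · rw [hheadD] at hd
          rw [← Option.some_inj.mp hd]
          exact okR_UD
        · obtain ⟨j, rfl⟩ : ∃ j, k = j + 1 := ⟨k - 1, by omega⟩
          simp [List.replicate_succ]
    · have : boxForm k (a :: b₀ :: r') =
          List.replicate a U ++ (List.replicate k D ++ (L :: D :: boxForm k (b₀ :: r'))) := by
        simp [boxForm]
      rw [this]
      refine chain_append' hU ?_ ?_
      · refine chain_append' hD ?_ ?_
        · refine List.isChain_cons_cons.mpr ⟨okR_LD, ?_⟩
          exact List.isChain_cons.mpr ⟨fun y _ => okR_D y, ih⟩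
        · intro c d hc _
          rw [hlastD c hc]; exact okR_D _
      · intro c d hc hd
        rw [hlastU c hc]
        rw [List.head?_append_of_ne_nil] at hd
        · rw [hheadD] at hd
          rw [← Option.some_inj.mp hd]
          exact okR_UD
        · obtain ⟨j, rfl⟩ : ∃ j, k = j + 1 := ⟨k - 1, by omega⟩
          simp [List.replicate_succ]

/-- prefixes with given counts exist in boxForm -/
lemma sums_boxForm (k : ℕ) : ∀ b : List ℕ, ∀ i, i < b.length →
    ∃ p, p <+: boxForm k b ∧ countU p = (b.take i).sum ∧ dns p = (k+2)*i := by
  intro b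
  induction b with
  | nil => simp
  | cons a r ih =>
    intro i hi
    rcases i with _ | j
    · exact ⟨[], List.nil_prefix, by simp [countU], by simp [dns, countD, countL]⟩
    · rcases r with _ | ⟨b₀, r'⟩
      · simp at hi
      · obtain ⟨p', hp', hcu', hdns'⟩ := ih j (by simp at hi ⊢; omega)
        refine ⟨(List.replicate a U ++ List.replicate k D ++ [L, D]) ++ p', ?_, ?_, ?_⟩
        · rw [boxForm]
          obtain ⟨t, ht⟩ := hp'
          exact ⟨t, by rw [List.append_assoc, ht]⟩
        · rw [cU_append, cU_append, cU_append, cU_repl_U, cU_repl_D, hcu']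
          simp [countU]
        · rw [dns_append, dns_append, dns_append, dns_repl_U, dns_repl_D, hdns']
          simp [dns, countD, countL]
          ring
def GoodL (k n : ℕ) (b : List ℕ) : Prop :=
  b.length = n ∧ (∀ x ∈ b, 1 ≤ x) ∧ (∀ i, i < n → (k+2)*i ≤ (b.take i).sum) ∧
    b.sum = (k+2)*n - 1

lemma boxPath_iff (k n : ℕ) (hk : 1 ≤ k) (hn : 1 ≤ n) (w : List Step) :
    IsBoxPath k n w ↔ ∃ b, GoodL k n b ∧ w = boxForm k b := by
  constructor
  · rintro ⟨⟨hpref, hbal, hUL, hLU⟩, hlen, hocc⟩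
    have hN : countU w = (k+2)*n - 1 := by simpa [semilength] using hlen
    have hP0 : Pref 0 w := fun p hp => by have := hpref p hp; unfold dns; omega
    have hB0 : dns w = countU w + 0 := by unfold dns; omega
    obtain ⟨_, heq⟩ := key k hk w.length w le_rfl 0 hP0 hB0 ⟨hUL, hLU⟩
    have hmul : 0 < (k+2)*n := Nat.mul_pos (by omega) (by omega)
    have harg : (k + 2) * numOccurrences (boxFactor k) w = countU w + 0 + 1 := by
      rw [hocc, hN]
      generalize (k+2)*n = m at hmul ⊢
      omega
    obtain ⟨b, hpos, hlenb, hform⟩ := heq harg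
    refine ⟨b, ⟨by rw [hlenb, hocc], hpos, ?_, ?_⟩, hform⟩
    · intro i hi
      obtain ⟨p, hp, hcu, hdns⟩ := sums_boxForm k b i (by rw [hlenb, hocc]; omega)
      have := hpref p (hform ▸ hp)
      unfold dns at hdns
      omega
    · rw [← cU_boxForm k b, ← hform]
      exact hN
  · rintro ⟨b, ⟨hlenb, hpos, hmid, hsum⟩, rfl⟩
    have hb0 : b ≠ [] := by intro h; subst h; simp at hlenb; omega
    have hmul : 0 < (k+2)*n := Nat.mul_pos (by omega) (by omega)
    have hcu : countU (boxForm k b) = (k+2)*n - 1 := by rw [cU_boxForm, hsum]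
    have hdns : dns (boxForm k b) + 1 = (k+2)*n := by rw [dns_boxForm k b hb0, hlenb]
    have hNoF : NoF (boxForm k b) := chain_to_NoF (chain_boxForm k hk b)
    refine ⟨⟨?_, by unfold dns at hdns; omega, hNoF.1, hNoF.2⟩, hcu, ?_⟩
    · intro p hp
      have := pref_boxForm k b 0 hb0 (fun i hi => by
          simpa using hmid i (hlenb ▸ hi))
        (by rw [hlenb, hsum]; generalize (k+2)*n = m at hmul ⊢; omega) p hp
      unfold dns at this; omega
    · rw [nOcc_boxForm k hk b hpos, hlenb]

lemma boxForm_zero_eq (k : ℕ) (r : List ℕ) :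
    ∃ t, boxForm k (0 :: r) = List.replicate k D ++ (L :: t) := by
  rcases r with _ | ⟨b₀, r'⟩
  · exact ⟨[], by simp [boxForm]⟩
  · exact ⟨D :: boxForm k (b₀ :: r'), by simp [boxForm]⟩

lemma boxForm_aux (k : ℕ) (hk : 1 ≤ k) : ∀ a c : ℕ, ∀ r s : List ℕ,
    boxForm k (a :: r) = boxForm k (c :: s) → a = c ∧ boxForm k (0 :: r) = boxForm k (0 :: s) := by
  intro a
  induction a with
  | zero =>
    intro c r s h
    rcases c with _ | c'
    · exact ⟨rfl, h⟩
    · exfalso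
      rw [boxForm_cons_succ] at h
      obtain ⟨t, ht⟩ := boxForm_zero_eq k r
      rw [ht] at h
      obtain ⟨j, rfl⟩ : ∃ j, k = j + 1 := ⟨k - 1, by omega⟩
      rw [List.replicate_succ, List.cons_append] at h
      simp at h
  | succ a' ih =>
    intro c r s h
    rcases c with _ | c'
    · exfalso
      rw [boxForm_cons_succ] at h
      obtain ⟨t, ht⟩ := boxForm_zero_eq k s
      rw [ht] at h
      obtain ⟨j, rfl⟩ : ∃ j, k = j + 1 := ⟨k - 1, by omega⟩
      rw [List.replicate_succ, List.cons_append] at h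
      simp at h
    · rw [boxForm_cons_succ, boxForm_cons_succ] at h
      obtain ⟨ha, ht⟩ := ih c' r s (by simpa using h)
      exact ⟨by omega, ht⟩

lemma boxForm_inj (k : ℕ) (hk : 1 ≤ k) : ∀ b c : List ℕ,
    boxForm k b = boxForm k c → b = c := by
  have hne : ∀ c₀ : ℕ, ∀ s : List ℕ, boxForm k (c₀ :: s) ≠ [] := by
    intro c₀ s h
    have hd := dns_boxForm k (c₀ :: s) (by simp)
    rw [h] at hd
    simp [dns, countD, countL] at hd
    have h3 : k + 2 ≤ (k+2) * (s.length + 1) := Nat.le_mul_of_pos_right _ (by omega)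
    omega
  intro b
  induction b with
  | nil =>
    intro c h
    rcases c with _ | ⟨c₀, s⟩
    · rfl
    · exact absurd ((by simpa [boxForm] using h.symm : boxForm k (c₀ :: s) = [])) (hne c₀ s)
  | cons b₀ r ih =>
    intro c h
    rcases c with _ | ⟨c₀, s⟩
    · exact absurd ((by simpa [boxForm] using h : boxForm k (b₀ :: r) = [])) (hne b₀ r)
    · obtain ⟨rfl, hz⟩ := boxForm_aux k hk b₀ c₀ r s h
      rcases r with _ | ⟨r₀, r'⟩ <;> rcases s with _ | ⟨s₀, s'⟩
      · rfl
      · exfalso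
        simp [boxForm] at hz
      · exfalso
        simp [boxForm] at hz
      · simp only [boxForm] at hz
        simp at hz
        exact congrArg _ (ih (s₀ :: s') hz)
/-! ### Cycle lemma -/

def validT (q : ℕ) (T : Finset ℕ) : Prop :=
  0 ∈ T ∧ ∀ x ∈ T, q * (T.filter (· < x)).card ≤ x

instance validT_dec (q : ℕ) (T : Finset ℕ) : Decidable (validT q T) := by
  unfold validT; infer_instance

def rotT (N r : ℕ) (T : Finset ℕ) : Finset ℕ := T.image (fun x => (x + r) % N)

def gfun (q : ℕ) (T : Finset ℕ) (y : ℕ) : ℤ :=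
  ((q * (T.filter (· < y)).card : ℕ) : ℤ) - (y : ℤ)

lemma rotT_zero {N : ℕ} {T : Finset ℕ} (hT : T ⊆ Finset.range N) : rotT N 0 T = T := by
  unfold rotT
  rw [show T = T.image id from (Finset.image_id).symm]
  rw [Finset.image_image]
  apply Finset.image_congr
  intro x hx
  simp only [Function.comp, id]
  exact Nat.mod_eq_of_lt (by simpa using hT (by simpa using hx))

lemma rotT_sub {N r : ℕ} (hN : 0 < N) (T : Finset ℕ) : rotT N r T ⊆ Finset.range N := by
  intro x hx
  obtain ⟨y, _, rfl⟩ := Finset.mem_image.mp hx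
  simp [Nat.mod_lt _ hN]

lemma rotT_rotT {N a b : ℕ} (T : Finset ℕ) :
    rotT N a (rotT N b T) = rotT N ((a + b) % N) T := by
  unfold rotT
  rw [Finset.image_image]
  apply Finset.image_congr
  intro x _
  simp only [Function.comp]
  rw [Nat.mod_add_mod, Nat.add_mod_mod]
  congr 1
  omega

lemma rotT_injOn {N r : ℕ} (hN : 0 < N) (T : Finset ℕ) (hT : T ⊆ Finset.range N) :
    Set.InjOn (fun x => (x + r) % N) T := by
  intro x hx y hy hxy
  have hx' : x < N := by simpa using hT (by simpa using hx)
  have hy' : y < N := by simpa using hT (by simpa using hy)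
  simp only at hxy
  have := Nat.ModEq.add_right_cancel' r (hxy : (x + r) % N = (y + r) % N)
  have hxm := Nat.mod_eq_of_lt hx'
  have hym := Nat.mod_eq_of_lt hy'
  unfold Nat.ModEq at this
  omega

lemma rotT_card {N r : ℕ} (hN : 0 < N) (T : Finset ℕ) (hT : T ⊆ Finset.range N) :
    (rotT N r T).card = T.card :=
  Finset.card_image_of_injOn (rotT_injOn hN T hT)

lemma rotT_mem_P {N r n : ℕ} (hN : 0 < N) {T : Finset ℕ}
    (hT : T ∈ Finset.powersetCard n (Finset.range N)) :
    rotT N r T ∈ Finset.powersetCard n (Finset.range N) := by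
  rw [Finset.mem_powersetCard] at hT ⊢
  exact ⟨rotT_sub hN T, by rw [rotT_card hN T hT.1, hT.2]⟩

/-- the central translation lemma -/
lemma translateCL (q N n : ℕ) (hN : 0 < N) (hqn : q * n = N + 1) (S : Finset ℕ)
    (hSsub : S ⊆ Finset.range N) (hScard : S.card = n) {s : ℕ} (hs : s ∈ S) :
    validT q (rotT N ((N - s) % N) S) ↔
      ((∀ y ∈ S, s ≤ y → gfun q S y ≤ gfun q S s) ∧
       (∀ y ∈ S, y < s → gfun q S y < gfun q S s)) := by
  classical
  set ρ : ℕ → ℕ := fun x => (x + (N - s)) % N with hρ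
  have hsN : s < N := by simpa using hSsub hs
  have hrot : rotT N ((N - s) % N) S = S.image ρ := by
    unfold rotT
    apply Finset.image_congr
    intro x _
    show (x + (N - s) % N) % N = (x + (N - s)) % N
    rw [Nat.add_mod_mod]
  have hρge : ∀ x, s ≤ x → x < N → ρ x = x - s := by
    intro x hx hxN
    show (x + (N - s)) % N = x - s
    rw [show x + (N - s) = (x - s) + N by omega, Nat.add_mod_right,
      Nat.mod_eq_of_lt (by omega)]
  have hρlt : ∀ x, x < s → ρ x = x + (N - s) := by
    intro x hx
    exact Nat.mod_eq_of_lt (by omega)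
  have hρinj : Set.InjOn ρ S := by
    rw [hρ]
    have : (fun x => (x + (N - s)) % N) = (fun x => (x + ((N - s))) % N) := rfl
    exact rotT_injOn hN S hSsub
  have hρs : ρ s = 0 := by rw [hρge s le_rfl hsN]; omega
  have hcount : ∀ y ∈ S, ((S.image ρ).filter (· < ρ y)).card
      = (S.filter (fun z => ρ z < ρ y)).card := by
    intro y hy
    rw [Finset.filter_image]
    exact Finset.card_image_of_injOn (hρinj.mono (Finset.filter_subset _ _))
  have hcase1 : ∀ y ∈ S, s ≤ y →
      ((q * (S.filter (fun z => ρ z < ρ y)).card ≤ ρ y) ↔ gfun q S y ≤ gfun q S s) := by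
    intro y hy hsy
    have hyN : y < N := by simpa using hSsub hy
    rw [hρge y hsy hyN]
    have hfe : S.filter (fun z => ρ z < y - s) = S.filter (fun z => s ≤ z ∧ z < y) := by
      apply Finset.filter_congr
      intro z hz
      have hzN : z < N := by simpa using hSsub hz
      rcases le_or_gt s z with h1 | h1
      · rw [hρge z h1 hzN]; omega
      · rw [hρlt z h1]; omega
    rw [hfe]
    have hsplit : S.filter (fun z => z < y)
        = S.filter (fun z => z < s) ∪ S.filter (fun z => s ≤ z ∧ z < y) := by
      ext a
      simp only [Finset.mem_union, Finset.mem_filter]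
      by_cases hS : a ∈ S
      · simp [hS]; omega
      · simp [hS]
    have hdisj : Disjoint (S.filter (fun z => z < s)) (S.filter (fun z => s ≤ z ∧ z < y)) := by
      rw [Finset.disjoint_left]
      intro a ha hb
      rw [Finset.mem_filter] at ha hb
      omega
    have hcards : (S.filter (fun z => z < y)).card
        = (S.filter (fun z => z < s)).card + (S.filter (fun z => s ≤ z ∧ z < y)).card := by
      rw [hsplit, Finset.card_union_of_disjoint hdisj]
    have hmul : q * (S.filter (fun z => z < y)).card
        = q * (S.filter (fun z => z < s)).card + q * (S.filter (fun z => s ≤ z ∧ z < y)).card := by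
      rw [hcards, Nat.mul_add]
    unfold gfun
    have e1 : (S.filter (· < y)) = (S.filter (fun z => z < y)) := rfl
    have e2 : (S.filter (· < s)) = (S.filter (fun z => z < s)) := rfl
    rw [e1, e2]
    omega
  have hcase2 : ∀ y ∈ S, y < s →
      ((q * (S.filter (fun z => ρ z < ρ y)).card ≤ ρ y) ↔ gfun q S y < gfun q S s) := by
    intro y hy hys
    have hyN : y < N := by simpa using hSsub hy
    rw [hρlt y hys]
    have hfe : S.filter (fun z => ρ z < y + (N - s)) = S.filter (fun z => s ≤ z ∨ z < y) := by
      apply Finset.filter_congr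
      intro z hz
      have hzN : z < N := by simpa using hSsub hz
      rcases le_or_gt s z with h1 | h1
      · rw [hρge z h1 hzN]; omega
      · rw [hρlt z h1]; omega
    rw [hfe]
    have hsplit : S.filter (fun z => s ≤ z ∨ z < y)
        = S.filter (fun z => s ≤ z) ∪ S.filter (fun z => z < y) := by
      ext a
      simp only [Finset.mem_union, Finset.mem_filter]
      by_cases hS : a ∈ S
      · simp [hS]
      · simp [hS]
    have hdisj : Disjoint (S.filter (fun z => s ≤ z)) (S.filter (fun z => z < y)) := by
      rw [Finset.disjoint_left]
      intro a ha hb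
      rw [Finset.mem_filter] at ha hb
      omega
    have hpart : (S.filter (fun z => z < s)).card + (S.filter (fun z => s ≤ z)).card = n := by
      have hcon : S.filter (fun z => ¬ z < s) = S.filter (fun z => s ≤ z) := by
        apply Finset.filter_congr; intro z _; omega
      rw [← hcon, Finset.card_filter_add_card_filter_not, hScard]
    have hcards : (S.filter (fun z => s ≤ z ∨ z < y)).card
        = (S.filter (fun z => s ≤ z)).card + (S.filter (fun z => z < y)).card := by
      rw [hsplit, Finset.card_union_of_disjoint hdisj]
    have hsum : (S.filter (fun z => s ≤ z ∨ z < y)).card + (S.filter (fun z => z < s)).card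
        = n + (S.filter (fun z => z < y)).card := by omega
    have hmul : q * (S.filter (fun z => s ≤ z ∨ z < y)).card + q * (S.filter (fun z => z < s)).card
        = q * n + q * (S.filter (fun z => z < y)).card := by
      rw [← Nat.mul_add, ← Nat.mul_add, hsum]
    unfold gfun
    have e1 : (S.filter (· < y)) = (S.filter (fun z => z < y)) := rfl
    have e2 : (S.filter (· < s)) = (S.filter (fun z => z < s)) := rfl
    rw [e1, e2]
    omega
  rw [hrot]
  unfold validT
  constructor
  · rintro ⟨-, H⟩
    constructor
    · intro y hy hsy
      have := H (ρ y) (Finset.mem_image_of_mem _ hy)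
      rw [hcount y hy] at this
      exact (hcase1 y hy hsy).mp this
    · intro y hy hys
      have := H (ρ y) (Finset.mem_image_of_mem _ hy)
      rw [hcount y hy] at this
      exact (hcase2 y hy hys).mp this
  · rintro ⟨H1, H2⟩
    constructor
    · exact Finset.mem_image.mpr ⟨s, hs, hρs⟩
    · intro x hx
      obtain ⟨y, hy, rfl⟩ := Finset.mem_image.mp hx
      rw [hcount y hy]
      rcases le_or_gt s y with h1 | h1
      · exact (hcase1 y hy h1).mpr (H1 y hy h1)
      · exact (hcase2 y hy h1).mpr (H2 y hy h1)
lemma mod_eq_zero_small {a N : ℕ} (hN : 0 < N) (h : a % N = 0) (h2 : a < 2*N) :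
    a = 0 ∨ a = N := by
  have hd := Nat.div_add_mod a N
  have hlt : a / N < 2 := Nat.div_lt_of_lt_mul (by omega)
  rcases Nat.le_one_iff_eq_zero_or_eq_one.mp (by omega : a / N ≤ 1) with h0 | h1
  · rw [h0, Nat.mul_zero] at hd; omega
  · rw [h1, Nat.mul_one] at hd; omega

lemma rotT_cancel {N r : ℕ} (hN : 0 < N) (hr : r ≤ N) {T : Finset ℕ}
    (hT : T ⊆ Finset.range N) : rotT N ((N - r) % N) (rotT N r T) = T := by
  rw [rotT_rotT, Nat.mod_add_mod, show N - r + r = N by omega, Nat.mod_self, rotT_zero hT]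

lemma exists_unique_valid_rot (q N n : ℕ) (hN : 0 < N) (hqn : q * n = N + 1) (hn : 0 < n)
    (S : Finset ℕ) (hSsub : S ⊆ Finset.range N) (hScard : S.card = n) :
    ∃! r : ℕ, r < N ∧ validT q (rotT N r S) := by
  classical
  have hSne : S.Nonempty := Finset.card_pos.mp (by omega)
  have hgne : (S.image (gfun q S)).Nonempty := hSne.image _
  set M := (S.image (gfun q S)).max' hgne with hM
  obtain ⟨s₀, hs₀S, hs₀M⟩ := Finset.mem_image.mp ((S.image (gfun q S)).max'_mem hgne)
  set F := S.filter (fun y => gfun q S y = M) with hF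
  have hFne : F.Nonempty := ⟨s₀, Finset.mem_filter.mpr ⟨hs₀S, hs₀M⟩⟩
  set s := F.min' hFne with hsdef
  have hsF : s ∈ F := F.min'_mem hFne
  have hsS : s ∈ S := (Finset.mem_filter.mp hsF).1
  have hgs : gfun q S s = M := (Finset.mem_filter.mp hsF).2
  have hP1 : ∀ y ∈ S, s ≤ y → gfun q S y ≤ gfun q S s := by
    intro y hy _
    rw [hgs]
    exact Finset.le_max' _ _ (Finset.mem_image_of_mem _ hy)
  have hP2 : ∀ y ∈ S, y < s → gfun q S y < gfun q S s := by
    intro y hy hys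
    have hle : gfun q S y ≤ M := Finset.le_max' _ _ (Finset.mem_image_of_mem _ hy)
    rcases eq_or_lt_of_le hle with heq | hlt
    · exfalso
      have : y ∈ F := Finset.mem_filter.mpr ⟨hy, heq⟩
      have := F.min'_le y this
      omega
    · rw [hgs]; exact hlt
  have hPs : ∀ x ∈ S, (∀ y ∈ S, x ≤ y → gfun q S y ≤ gfun q S x) →
      (∀ y ∈ S, y < x → gfun q S y < gfun q S x) → x = s := by
    intro x hxS hx1 hx2
    rcases lt_trichotomy x s with h | h | h
    · have h1 := hP2 x hxS h
      have h2 := hx1 s hsS (le_of_lt h)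
      omega
    · exact h
    · have h1 := hx2 s hsS h
      have h2 := hP1 x hxS (le_of_lt h)
      omega
  refine ⟨(N - s) % N, ⟨Nat.mod_lt _ hN, ?_⟩, ?_⟩
  · exact (translateCL q N n hN hqn S hSsub hScard hsS).mpr ⟨hP1, hP2⟩
  · rintro r' ⟨hr'N, hv⟩
    obtain ⟨x, hxS, hx0⟩ := Finset.mem_image.mp hv.1
    have hxN : x < N := by simpa using hSsub hxS
    have hr'x : r' = (N - x) % N := by
      rcases mod_eq_zero_small hN hx0 (by omega) with h | h
      · have hx' : x = 0 := by omega
        have hr'' : r' = 0 := by omega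
        rw [hx', hr'', Nat.sub_zero, Nat.mod_self]
      · have hx1 : 1 ≤ x := by
          by_contra hc
          have : x = 0 := by omega
          omega
        rw [Nat.mod_eq_of_lt (by omega)]
        omega
    have hvx : validT q (rotT N ((N - x) % N) S) := hr'x ▸ hv
    obtain ⟨hx1, hx2⟩ := (translateCL q N n hN hqn S hSsub hScard hxS).mp hvx
    rw [hr'x, hPs x hxS hx1 hx2]

lemma cycle_count (q N n : ℕ) (hN : 0 < N) (hqn : q * n = N + 1) (hn : 0 < n) :
    N * ((Finset.powersetCard n (Finset.range N)).filter (fun T => validT q T)).card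
      = N.choose n := by
  classical
  set G := (Finset.powersetCard n (Finset.range N)).filter (fun T => validT q T) with hG
  have h1 : ((Finset.range N) ×ˢ G).card = N * G.card := by
    rw [Finset.card_product, Finset.card_range]
  have h2 : (Finset.powersetCard n (Finset.range N)).card = N.choose n := by
    rw [Finset.card_powersetCard, Finset.card_range]
  rw [← h1, ← h2]
  apply Finset.card_bij (fun (p : ℕ × Finset ℕ) _ => rotT N p.1 p.2)
  · rintro ⟨r, T⟩ hp
    rw [Finset.mem_product] at hp
    exact rotT_mem_P hN (Finset.mem_filter.mp hp.2).1
  · rintro ⟨r, T⟩ hp ⟨r', T'⟩ hp' heq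
    rw [Finset.mem_product] at hp hp'
    simp only at heq
    obtain ⟨hrmem, hTmem⟩ := hp
    obtain ⟨hr'mem, hT'mem⟩ := hp'
    have hrN : r < N := Finset.mem_range.mp hrmem
    have hr'N : r' < N := Finset.mem_range.mp hr'mem
    obtain ⟨hTP, hTv⟩ := Finset.mem_filter.mp hTmem
    obtain ⟨hT'P, hT'v⟩ := Finset.mem_filter.mp hT'mem
    obtain ⟨hTsub, hTcard⟩ := Finset.mem_powersetCard.mp hTP
    obtain ⟨hT'sub, hT'card⟩ := Finset.mem_powersetCard.mp hT'P
    have hstep : T' = rotT N (((N - r') % N + r) % N) T := by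
      have e1 : rotT N ((N - r') % N) (rotT N r' T') = T' :=
        rotT_cancel hN (by omega) hT'sub
      rw [← e1, ← heq, rotT_rotT]
    have hcval : validT q (rotT N ((((N - r') % N + r) % N)) T) := by
      rw [← hstep]; exact hT'v
    have h0val : validT q (rotT N 0 T) := by rw [rotT_zero hTsub]; exact hTv
    obtain ⟨r₀, -, hu⟩ := exists_unique_valid_rot q N n hN hqn hn T hTsub hTcard
    have e0 : (0 : ℕ) = r₀ := hu 0 ⟨hN, h0val⟩
    have ec : ((N - r') % N + r) % N = r₀ := hu _ ⟨Nat.mod_lt _ hN, hcval⟩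
    have hc0 : ((N - r') % N + r) % N = 0 := by omega
    have hrr' : r = r' := by
      by_cases hz : r' = 0
      · subst hz
        rw [Nat.sub_zero, Nat.mod_self, Nat.zero_add, Nat.mod_eq_of_lt hrN] at hc0
        omega
      · rw [Nat.mod_eq_of_lt (show N - r' < N by omega)] at hc0
        rcases mod_eq_zero_small hN hc0 (by omega) with h | h <;> omega
    subst hrr'
    have hTT' : T = T' := by
      have e2 : rotT N ((N - r) % N) (rotT N r T) = T := rotT_cancel hN (by omega) hTsub
      have e3 : rotT N ((N - r) % N) (rotT N r T') = T' := rotT_cancel hN (by omega) hT'sub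
      rw [← e2, ← e3, heq]
    rw [hTT']
  · intro A hA
    obtain ⟨hAsub, hAcard⟩ := Finset.mem_powersetCard.mp hA
    obtain ⟨r₀, ⟨hr₀N, hv₀⟩, -⟩ := exists_unique_valid_rot q N n hN hqn hn A hAsub hAcard
    refine ⟨((N - r₀) % N, rotT N r₀ A), ?_, ?_⟩
    · rw [Finset.mem_product]
      exact ⟨Finset.mem_range.mpr (Nat.mod_lt _ hN),
        Finset.mem_filter.mpr ⟨rotT_mem_P hN hA, hv₀⟩⟩
    · exact rotT_cancel hN (by omega) hAsub
/-! ### lists ↔ subsets -/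

def toT (n : ℕ) (b : List ℕ) : Finset ℕ := (Finset.range n).image (fun i => (b.take i).sum)

lemma take_sum_le (b : List ℕ) (i : ℕ) : (b.take i).sum ≤ b.sum := by
  conv_rhs => rw [← List.take_append_drop i b]
  rw [List.sum_append]
  omega

lemma goodL_mono {k n : ℕ} {b : List ℕ} (hb : GoodL k n b) :
    ∀ j ≤ n, ∀ i < j, (b.take i).sum < (b.take j).sum := by
  obtain ⟨hlen, hpos, _, _⟩ := hb
  have hstep : ∀ i < n, (b.take i).sum + 1 ≤ (b.take (i+1)).sum := by
    intro i hi
    have hib : i < b.length := by omega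
    rw [List.sum_take_succ b i hib]
    have := hpos (b[i]) (by exact List.getElem_mem hib)
    omega
  intro j
  induction j with
  | zero => intro _ i hi; omega
  | succ m ih =>
    intro hm i hi
    rcases (show i = m ∨ i < m by omega) with rfl | hlt
    · have := hstep i (by omega); omega
    · have h1 := ih (by omega) i hlt
      have h2 := hstep m (by omega)
      omega

lemma goodL_injOn {k n : ℕ} {b : List ℕ} (hb : GoodL k n b) :
    Set.InjOn (fun i => (b.take i).sum) (Finset.range n) := by
  intro i hi j hj hij
  simp only [Finset.coe_range, Set.mem_Iio] at hi hj
  have hij' : (b.take i).sum = (b.take j).sum := hij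
  clear hij
  rename' hij' => hij
  by_contra hne
  rcases lt_or_gt_of_ne hne with h | h
  · have := goodL_mono hb j (by omega) i h; omega
  · have := goodL_mono hb i (by omega) j h; omega

lemma toT_filter_card {k n : ℕ} {b : List ℕ} (hb : GoodL k n b) (i : ℕ) (hi : i < n) :
    ((toT n b).filter (· < (b.take i).sum)).card = i := by
  classical
  unfold toT
  rw [Finset.filter_image]
  have hre : (Finset.range n).filter (fun j => (b.take j).sum < (b.take i).sum)
      = Finset.range i := by
    ext j
    simp only [Finset.mem_filter, Finset.mem_range]
    constructor
    · rintro ⟨hjn, hlt⟩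
      by_contra hc
      push_neg at hc
      rcases eq_or_lt_of_le hc with rfl | h
      · omega
      · have := goodL_mono hb j (by omega) i h; omega
    · intro hj
      exact ⟨by omega, goodL_mono hb i (by omega) j hj⟩
  rw [hre, Finset.card_image_of_injOn ((goodL_injOn hb).mono (by
    intro x hx
    simp only [Finset.coe_range, Set.mem_Iio] at hx ⊢
    omega)), Finset.card_range]

lemma toT_good {k n : ℕ} (hn : 1 ≤ n) {b : List ℕ} (hb : GoodL k n b) :
    toT n b ∈ Finset.powersetCard n (Finset.range ((k+2)*n - 1)) ∧ validT (k+2) (toT n b) := by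
  classical
  obtain ⟨hlen, hpos, hmid, hsum⟩ := hb
  have htaken : (b.take n).sum = (k+2)*n - 1 := by
    rw [List.take_of_length_le (by omega), hsum]
  refine ⟨Finset.mem_powersetCard.mpr ⟨?_, ?_⟩, ?_, ?_⟩
  · intro x hx
    obtain ⟨i, hi, rfl⟩ := Finset.mem_image.mp hx
    rw [Finset.mem_range] at hi ⊢
    have := goodL_mono ⟨hlen, hpos, hmid, hsum⟩ n le_rfl i hi
    omega
  · unfold toT
    rw [Finset.card_image_of_injOn (goodL_injOn ⟨hlen, hpos, hmid, hsum⟩), Finset.card_range]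
  · show (0:ℕ) ∈ (Finset.range n).image _
    exact Finset.mem_image.mpr ⟨0, by simp; omega, by simp⟩
  · intro x hx
    obtain ⟨i, hi, rfl⟩ := Finset.mem_image.mp hx
    rw [Finset.mem_range] at hi
    rw [toT_filter_card ⟨hlen, hpos, hmid, hsum⟩ i hi]
    exact hmid i hi

lemma filter_card_strict {T : Finset ℕ} {x y : ℕ} (hx : x ∈ T) (hlt : x < y) :
    (T.filter (· < x)).card < (T.filter (· < y)).card := by
  classical
  apply Finset.card_lt_card
  rw [Finset.ssubset_iff_of_subset (by
    intro z hz
    rw [Finset.mem_filter] at hz ⊢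
    exact ⟨hz.1, by omega⟩)]
  exact ⟨x, Finset.mem_filter.mpr ⟨hx, hlt⟩, by simp⟩

lemma toT_inj {k n : ℕ} {b b' : List ℕ} (hb : GoodL k n b) (hb' : GoodL k n b')
    (h : toT n b = toT n b') : b = b' := by
  have hSt : ∀ i < n, (b.take i).sum = (b'.take i).sum := by
    intro i hi
    have h1 : (b.take i).sum ∈ toT n b :=
      Finset.mem_image.mpr ⟨i, Finset.mem_range.mpr hi, rfl⟩
    have h2 : (b'.take i).sum ∈ toT n b := by
      rw [h]; exact Finset.mem_image.mpr ⟨i, Finset.mem_range.mpr hi, rfl⟩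
    have hc1 : ((toT n b).filter (· < (b.take i).sum)).card = i := toT_filter_card hb i hi
    have hc2 : ((toT n b).filter (· < (b'.take i).sum)).card = i := by
      rw [h]; exact toT_filter_card hb' i hi
    rcases lt_trichotomy ((b.take i).sum) ((b'.take i).sum) with hlt | heq | hgt
    · have := filter_card_strict h1 hlt; omega
    · exact heq
    · have := filter_card_strict h2 hgt; omega
  have hStn : ∀ i ≤ n, (b.take i).sum = (b'.take i).sum := by
    intro i hi
    rcases eq_or_lt_of_le hi with rfl | h
    · rw [List.take_of_length_le (le_of_eq hb.1), List.take_of_length_le (le_of_eq hb'.1),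
        hb.2.2.2, hb'.2.2.2]
    · exact hSt i h
  apply List.ext_get (by rw [hb.1, hb'.1])
  intro i h₁ h₂
  have hin : i < n := by rw [hb.1] at h₁; exact h₁
  have e1 := List.sum_take_succ b i h₁
  have e2 := List.sum_take_succ b' i h₂
  have g1 : b.get ⟨i, h₁⟩ = b[i] := rfl
  have g2 : b'.get ⟨i, h₂⟩ = b'[i] := rfl
  rw [g1, g2]
  have h3 := hStn i (by omega)
  have h4 := hStn (i+1) (by omega)
  omega

lemma toT_surj {k n : ℕ} (hk : 1 ≤ k) (hn : 1 ≤ n) (T : Finset ℕ)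
    (hTP : T ∈ Finset.powersetCard n (Finset.range ((k+2)*n - 1)))
    (hTv : validT (k+2) T) : ∃ b, GoodL k n b ∧ toT n b = T := by
  classical
  set N := (k+2)*n - 1 with hNdef
  obtain ⟨hTsub, hTcard⟩ := Finset.mem_powersetCard.mp hTP
  set t := T.orderEmbOfFin hTcard with ht
  have htmem : ∀ i : Fin n, t i ∈ T := fun i => T.orderEmbOfFin_mem hTcard i
  have htN : ∀ i : Fin n, t i < N := fun i => Finset.mem_range.mp (hTsub (htmem i))
  set tx : ℕ → ℕ := fun i => if h : i < n then t ⟨i, h⟩ else N with htx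
  have ht0 : tx 0 = 0 := by
    have h0T : (0:ℕ) ∈ T := hTv.1
    have hmin : T.min' ⟨0, h0T⟩ = 0 :=
      le_antisymm (T.min'_le 0 h0T) (Nat.zero_le _)
    have := Finset.orderEmbOfFin_zero hTcard (by omega : 0 < n)
    rw [htx]
    simp only [dif_pos (by omega : 0 < n)]
    rw [← ht] at this
    rw [this, hmin]
  have htxmono : ∀ i j, i < j → j ≤ n → tx i < tx j := by
    intro i j hij hj
    have hi : i < n := by omega
    rcases eq_or_lt_of_le hj with rfl | hjn
    · rw [htx]
      simp only [dif_pos hi, dif_neg (lt_irrefl j)]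
      exact htN _
    · rw [htx]
      simp only [dif_pos hi, dif_pos hjn]
      exact t.strictMono (by exact Fin.mk_lt_mk.mpr hij)
  have hsurjT : ∀ x ∈ T, ∃ i : Fin n, t i = x := by
    intro x hx
    have hr := Finset.range_orderEmbOfFin T hTcard
    have : x ∈ Set.range ⇑(T.orderEmbOfFin hTcard) := by rw [hr]; exact hx
    obtain ⟨i, hi⟩ := this
    exact ⟨i, by rw [ht]; exact hi⟩
  have hfiltcard : ∀ i : Fin n, (T.filter (· < t i)).card = (i : ℕ) := by
    intro i
    have h : (Finset.range (i : ℕ)).card = (T.filter (· < t i)).card := by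
      apply Finset.card_bij
        (fun (j : ℕ) (hj : j ∈ Finset.range (i : ℕ)) =>
          t ⟨j, by have := Finset.mem_range.mp hj; omega⟩)
      · intro j hj
        refine Finset.mem_filter.mpr ⟨htmem _, ?_⟩
        exact t.strictMono (Fin.mk_lt_mk.mpr (Finset.mem_range.mp hj))
      · intro j₁ hj₁ j₂ hj₂ he
        have := t.injective he
        simpa using congrArg Fin.val this
      · intro x hx
        obtain ⟨hxT, hxlt⟩ := Finset.mem_filter.mp hx
        obtain ⟨j, rfl⟩ := hsurjT x hxT
        have hxlt' : t j < t i := hxlt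
        have hji : j < i := by
          by_contra hc
          push_neg at hc
          have : t i ≤ t j := t.monotone hc
          omega
        exact ⟨(j : ℕ), Finset.mem_range.mpr hji, by simp⟩
    rw [Finset.card_range] at h
    omega
  set b := List.ofFn (fun i : Fin n => tx ((i : ℕ)+1) - tx (i : ℕ)) with hbdef
  have hblen : b.length = n := List.length_ofFn
  have hget : ∀ (i : ℕ) (h : i < n), b[i]'(by omega) = tx (i+1) - tx i := by
    intro i h
    have := List.getElem_ofFn (f := fun i : Fin n => tx ((i : ℕ)+1) - tx (i : ℕ)) (i := i)
      (by rw [List.length_ofFn]; exact h)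
    exact this
  have hps : ∀ i, i ≤ n → (b.take i).sum = tx i := by
    intro i
    induction i with
    | zero => intro _; rw [ht0]; simp
    | succ j ih =>
      intro hj
      rw [List.sum_take_succ b j (by omega), ih (by omega), hget j (by omega)]
      have := htxmono j (j+1) (by omega) (by omega)
      omega
  have htxi : ∀ (i : ℕ) (h : i < n), tx i = t ⟨i, h⟩ := by
    intro i h; rw [htx]; simp only [dif_pos h]
  have htxn : tx n = N := by rw [htx]; simp only [dif_neg (lt_irrefl n)]
  refine ⟨b, ⟨hblen, ?_, ?_, ?_⟩, ?_⟩
  · intro x hx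
    rw [hbdef] at hx
    rw [List.mem_ofFn] at hx
    obtain ⟨i, rfl⟩ := hx
    have := htxmono (i : ℕ) ((i : ℕ)+1) (by omega) (by omega)
    show 1 ≤ tx ((i : ℕ)+1) - tx (i : ℕ)
    omega
  · intro i hi
    rw [hps i (by omega), htxi i hi]
    have := hTv.2 (t ⟨i, hi⟩) (htmem _)
    rw [hfiltcard ⟨i, hi⟩] at this
    exact this
  · have := hps n le_rfl
    rw [List.take_of_length_le (by omega)] at this
    rw [this, htxn]
  · ext x
    unfold toT
    rw [Finset.mem_image]
    constructor
    · rintro ⟨i, hi, rfl⟩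
      rw [Finset.mem_range] at hi
      rw [hps i (by omega), htxi i hi]
      exact htmem _
    · intro hx
      obtain ⟨i, rfl⟩ := hsurjT x hx
      exact ⟨(i : ℕ), Finset.mem_range.mpr i.2, by rw [hps i (by omega), htxi i i.2]⟩
/-- The number of `k`-box paths of size `n` is `binom((k+2)n-1, n) / ((k+2)n-1)`. -/
theorem statement3 (k n : ℕ) (hk : 1 ≤ k) (hn : 1 ≤ n) :
    ((k+2)*n - 1) * Nat.card {w : List Step // IsBoxPath k n w} =
      Nat.choose ((k+2)*n - 1) n := by
  classical
  have h3 : 3 ≤ (k+2)*n := by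
    have := Nat.mul_le_mul (show 3 ≤ k+2 by omega) hn
    omega
  set N := (k+2)*n - 1 with hNdef
  have hN : 0 < N := by omega
  have hqn : (k+2) * n = N + 1 := by omega
  set G := (Finset.powersetCard n (Finset.range N)).filter (fun T => validT (k+2) T) with hG
  have hchoice : ∀ T : {T : Finset ℕ // T ∈ G}, ∃ b, GoodL k n b ∧ toT n b = T.1 := by
    rintro ⟨T, hT⟩
    rw [hG, Finset.mem_filter] at hT
    exact toT_surj hk hn T hT.1 hT.2
  have hbij : Nat.card {T : Finset ℕ // T ∈ G} = Nat.card {w : List Step // IsBoxPath k n w} := by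
    apply Nat.card_eq_of_bijective
      (fun T => (⟨boxForm k (hchoice T).choose,
        (boxPath_iff k n hk hn _).mpr ⟨_, (hchoice T).choose_spec.1, rfl⟩⟩ :
          {w : List Step // IsBoxPath k n w}))
    constructor
    · intro T T' he
      have h1 := (hchoice T).choose_spec
      have h2 := (hchoice T').choose_spec
      have hb : (hchoice T).choose = (hchoice T').choose :=
        boxForm_inj k hk _ _ (congrArg Subtype.val he)
      apply Subtype.ext
      rw [← h1.2, ← h2.2, hb]
    · rintro ⟨w, hw⟩
      obtain ⟨b, hbG, rfl⟩ := (boxPath_iff k n hk hn w).mp hw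
      have hTG : toT n b ∈ G := by
        rw [hG, Finset.mem_filter]
        exact ⟨(toT_good hn hbG).1, (toT_good hn hbG).2⟩
      refine ⟨⟨toT n b, hTG⟩, ?_⟩
      have hc := (hchoice ⟨toT n b, hTG⟩).choose_spec
      have heqb : (hchoice ⟨toT n b, hTG⟩).choose = b := toT_inj hc.1 hbG hc.2
      apply Subtype.ext
      simp only [heqb]
  calc N * Nat.card {w : List Step // IsBoxPath k n w}
      = N * Nat.card {T : Finset ℕ // T ∈ G} := by rw [hbij]
    _ = N * G.card := by rw [Nat.card_eq_finsetCard]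
    _ = N.choose n := cycle_count (k+2) N n hN hqn (by omega)
end
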